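/- arXiv:2507.06912 — 7 statements merged into one kernel-verified Lean document; each statement's English description precedes it below -/
import Mathlib

section
/- Let H be a Hilbert space, ρ a density operator on H, and M an operator with 0 ≤ M ≤ I. If tr(ρM) ≤ ε, then the trace norm of Mρ satisfies ‖Mρ‖₁ ≤ √ε. -/
open Matrix ComplexOrder

open scoped MatrixOrder

lemma aux_diag_re_nonneg {n : ℕ} {A : Matrix (Fin n) (Fin n) ℂ} (hA : A.PosSemidef) (i : Fin n) :
    0 ≤ (A i i).re := by
  have := hA.re_dotProduct_nonneg (Pi.single i 1)
  simpa [dotProduct, Matrix.mulVec, Pi.single_apply] using this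

lemma aux_trace_re_nonneg {n : ℕ} {A : Matrix (Fin n) (Fin n) ℂ} (hA : A.PosSemidef) :
    0 ≤ A.trace.re := by
  rw [Matrix.trace, Complex.re_sum]
  exact Finset.sum_nonneg fun i _ => aux_diag_re_nonneg hA i

lemma aux_trace_mul_re_nonneg {n : ℕ} {A B : Matrix (Fin n) (Fin n) ℂ}
    (hA : A.PosSemidef) (hB : B.PosSemidef) : 0 ≤ ((A * B).trace).re := by
  obtain ⟨C, rfl⟩ := CStarAlgebra.nonneg_iff_eq_star_mul_self.mp hB.nonneg
  rw [← mul_assoc, Matrix.trace_mul_cycle]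
  exact aux_trace_re_nonneg (hA.mul_mul_conjTranspose_same C)

lemma aux_trace_mul_re_mono {n : ℕ} {A B C : Matrix (Fin n) (Fin n) ℂ}
    (hA : A.PosSemidef) (h : (B - C).PosSemidef) :
    ((A * C).trace).re ≤ ((A * B).trace).re := by
  have h0 := aux_trace_mul_re_nonneg hA h
  rw [mul_sub, Matrix.trace_sub, Complex.sub_re] at h0
  linarith

/-- The trace norm `‖A‖₁ = tr √(Aᴴ A)` of a complex matrix. -/
noncomputable def traceNorm {n : ℕ} (A : Matrix (Fin n) (Fin n) ℂ) : ℝ :=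
  (((Matrix.posSemidef_conjTranspose_mul_self A).1.eigenvectorUnitary : Matrix (Fin n) (Fin n) ℂ) *
      diagonal (((↑) : ℝ → ℂ) ∘ (√·) ∘ (Matrix.posSemidef_conjTranspose_mul_self A).1.eigenvalues) *
      (star (Matrix.posSemidef_conjTranspose_mul_self A).1.eigenvectorUnitary :
        Matrix (Fin n) (Fin n) ℂ)).trace.re

noncomputable def Matrix.PosSemidef.sqrt {n : ℕ} {A : Matrix (Fin n) (Fin n) ℂ}
    (_hA : A.PosSemidef) : Matrix (Fin n) (Fin n) ℂ :=
  CFC.sqrt A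

lemma Matrix.PosSemidef.sqrt_mul_self {n : ℕ} {A : Matrix (Fin n) (Fin n) ℂ}
    (hA : A.PosSemidef) : hA.sqrt * hA.sqrt = A :=
  CFC.sqrt_mul_sqrt_self A hA.nonneg

lemma Matrix.PosSemidef.posSemidef_sqrt {n : ℕ} {A : Matrix (Fin n) (Fin n) ℂ}
    (hA : A.PosSemidef) : hA.sqrt.PosSemidef :=
  (CFC.sqrt_nonneg A).posSemidef

lemma aux_traceNorm_eq {n : ℕ} (A : Matrix (Fin n) (Fin n) ℂ) :
    traceNorm A = ∑ i, Real.sqrt ((Matrix.posSemidef_conjTranspose_mul_self A).1.eigenvalues i) := by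
  rw [traceNorm, Matrix.trace_mul_cycle,
    Unitary.coe_star_mul_self, one_mul, Matrix.trace_diagonal, Complex.re_sum]
  simp

/-- If `ρ` is a density matrix, `0 ≤ M ≤ 1` and `tr(ρM) ≤ ε`, then `‖Mρ‖₁ ≤ √ε`. -/
theorem stmt_0 {n : ℕ} (ρ M : Matrix (Fin n) (Fin n) ℂ) (ε : ℝ)
    (hρ : ρ.PosSemidef) (hρtr : ρ.trace = 1)
    (hM : M.PosSemidef) (hM1 : (1 - M).PosSemidef)
    (hε : 0 ≤ ε) (htr : ((ρ * M).trace).re ≤ ε) :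
    traceNorm (M * ρ) ≤ Real.sqrt ε := by
  rw [aux_traceNorm_eq]
  set hPSD := Matrix.posSemidef_conjTranspose_mul_self (M * ρ) with hPSDdef
  set U : Matrix (Fin n) (Fin n) ℂ := (hPSD.1.eigenvectorUnitary : Matrix (Fin n) (Fin n) ℂ) with hUdef
  set μ : Fin n → ℝ := hPSD.1.eigenvalues with hμdef
  have hμ0 : ∀ i, 0 ≤ μ i := fun i => hPSD.eigenvalues_nonneg i
  have hUU : star U * U = 1 := Unitary.coe_star_mul_self _
  have hUU' : U * star U = 1 := Unitary.coe_mul_star_self _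
  set B : Matrix (Fin n) (Fin n) ℂ := (M * ρ) * U with hBdef
  set X : Matrix (Fin n) (Fin n) ℂ := M * hρ.sqrt with hXdef
  set Y : Matrix (Fin n) (Fin n) ℂ := hρ.sqrt * U with hYdef
  have hXY : B = X * Y := by
    rw [hXdef, hYdef, ← mul_assoc, mul_assoc M, hρ.sqrt_mul_self, hBdef]
  -- B^H B is the diagonal matrix of eigenvalues
  have hBtB : Bᴴ * B = Matrix.diagonal (fun i => (μ i : ℂ)) := by
    have hs := hPSD.1.conjStarAlgAut_star_eigenvectorUnitary
    rw [Unitary.conjStarAlgAut_star_apply] at hs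
    have : Bᴴ * B = star U * ((M * ρ)ᴴ * (M * ρ)) * U := by
      rw [hBdef, Matrix.conjTranspose_mul]
      simp only [Matrix.star_eq_conjTranspose, mul_assoc]
    rw [this, hs]
    rfl
  have hcolC : ∀ i j, ∑ k, (starRingEnd ℂ) (B k i) * B k j = if i = j then (μ i : ℂ) else 0 := by
    intro i j
    have h := Matrix.ext_iff.2 hBtB i j
    simpa [Matrix.mul_apply, Matrix.conjTranspose_apply, Matrix.diagonal_apply] using h
  have hcolR : ∀ i, ∑ k, Complex.normSq (B k i) = μ i := by
    intro i
    have h := hcolC i i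
    rw [if_pos rfl] at h
    have : ∑ k, (starRingEnd ℂ) (B k i) * B k i = ((∑ k, Complex.normSq (B k i) : ℝ) : ℂ) := by
      push_cast
      exact Finset.sum_congr rfl fun k _ => by rw [mul_comm, Complex.mul_conj]
    rw [this] at h
    exact_mod_cast h
  have hB0 : ∀ i, μ i = 0 → ∀ k, B k i = 0 := by
    intro i hi k
    have h := hcolR i
    rw [hi] at h
    have := (Finset.sum_eq_zero_iff_of_nonneg (fun k _ => Complex.normSq_nonneg (B k i))).1 h k
      (Finset.mem_univ k)
    exact Complex.normSq_eq_zero.1 this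
  -- the candidate left singular vectors
  set u : Fin n → Fin n → ℂ := fun i k => if μ i = 0 then 0 else B k i / (Real.sqrt (μ i) : ℂ)
    with hudef
  set U' : Matrix (Fin n) (Fin n) ℂ := Matrix.of fun k i => u i k with hU'def
  -- vectors
  set w : Fin n → EuclideanSpace ℂ (Fin n) := fun i => WithLp.toLp 2 (fun j => (Xᴴ * U') j i) with hwdef
  set y : Fin n → EuclideanSpace ℂ (Fin n) := fun i => WithLp.toLp 2 (fun j => Y j i) with hydef
  -- step A : pointwise bound
  have keyA : ∀ i, Real.sqrt (μ i) ≤ ‖w i‖ * ‖y i‖ := by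
    intro i
    by_cases hi : μ i = 0
    · rw [hi, Real.sqrt_zero]
      positivity
    · have hμpos : 0 < μ i := lt_of_le_of_ne (hμ0 i) (Ne.symm hi)
      have hdpos : 0 < Real.sqrt (μ i) := Real.sqrt_pos.2 hμpos
      have hinner : (inner ℂ (w i) (y i) : ℂ) = ((μ i : ℂ)) / (Real.sqrt (μ i) : ℂ) := by
        calc (inner ℂ (w i) (y i) : ℂ) = ∑ j, (starRingEnd ℂ) (w i j) * y i j := by
              simp [PiLp.inner_apply, RCLike.inner_apply, mul_comm]
          _ = ∑ j, ∑ k, (X k j * (starRingEnd ℂ) (u i k)) * Y j i := by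
              refine Finset.sum_congr rfl fun j _ => ?_
              rw [hwdef]
              simp only [Matrix.mul_apply, Matrix.conjTranspose_apply, hU'def, Matrix.of_apply,
                _root_.map_sum, Finset.sum_mul]
              refine Finset.sum_congr rfl fun k _ => ?_
              simp only [RCLike.star_def, _root_.map_mul, Complex.conj_conj, hydef]
              try ring
          _ = ∑ k, (starRingEnd ℂ) (u i k) * B k i := by
              rw [Finset.sum_comm]
              refine Finset.sum_congr rfl fun k _ => ?_
              rw [hXY]
              simp only [Matrix.mul_apply, Finset.mul_sum]
              exact Finset.sum_congr rfl fun j _ => by ring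
          _ = ((μ i : ℂ)) / (Real.sqrt (μ i) : ℂ) := by
              simp only [hudef, if_neg hi, map_div₀, Complex.conj_ofReal,
                div_mul_eq_mul_div]
              rw [← Finset.sum_div]
              congr 1
              simpa using hcolC i i
      have hre : Real.sqrt (μ i) = Complex.re (inner ℂ (w i) (y i) : ℂ) := by
        rw [hinner]
        rw [show ((μ i : ℂ)) / (Real.sqrt (μ i) : ℂ) = ((μ i / Real.sqrt (μ i) : ℝ) : ℂ) by
          push_cast; ring]
        rw [Complex.ofReal_re, Real.div_sqrt]
      rw [hre]
      exact re_inner_le_norm (𝕜 := ℂ) _ _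
  -- step B : the y's have total square norm 1
  have keyB : ∑ i, ‖y i‖ ^ 2 = 1 := by
    have hYY : Yᴴ * Y = star U * ρ * U := by
      rw [hYdef, Matrix.conjTranspose_mul, hρ.posSemidef_sqrt.1.eq]
      simp only [Matrix.star_eq_conjTranspose, mul_assoc]
      rw [← mul_assoc hρ.sqrt, hρ.sqrt_mul_self]
    have htrY : (Yᴴ * Y).trace = 1 := by
      rw [hYY, Matrix.trace_mul_cycle, hUU', one_mul, hρtr]
    have hsum : ∀ i, ‖y i‖ ^ 2 = ((Yᴴ * Y) i i).re := by
      intro i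
      rw [← inner_self_eq_norm_sq (𝕜 := ℂ)]
      congr 1
      try simp only [PiLp.inner_apply, RCLike.inner_apply, Matrix.mul_apply,
        Matrix.conjTranspose_apply, hydef]
      exact congrArg Complex.re (Finset.sum_congr rfl fun j _ => mul_comm _ _)
    have : (Yᴴ * Y).trace.re = ∑ i, ((Yᴴ * Y) i i).re := by
      rw [Matrix.trace, Complex.re_sum]
      rfl
    rw [Finset.sum_congr rfl fun i _ => hsum i, ← this, htrY]
    simp
  -- the partial isometry columns are orthonormal-or-zero
  have hE : U'ᴴ * U' = Matrix.diagonal (fun i => if μ i = 0 then (0 : ℂ) else 1) := by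
    ext i j
    simp only [Matrix.mul_apply, Matrix.conjTranspose_apply, Matrix.diagonal_apply,
      hU'def, Matrix.of_apply]
    by_cases hi : μ i = 0
    · simp [hudef, hi]
    · by_cases hj : μ j = 0
      · have hij : i ≠ j := fun h => hi (h ▸ hj)
        simp [hudef, hj, hij]
      · have key := hcolC i j
        simp only [hudef, if_neg hi, if_neg hj, RCLike.star_def, map_div₀,
          Complex.conj_ofReal, div_mul_div_comm]
        rw [← Finset.sum_div, key]
        by_cases hij : i = j
        · subst hij
          rw [if_pos rfl, if_pos rfl, ← Complex.ofReal_mul, Real.mul_self_sqrt (hμ0 i)]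
          exact div_self (by exact_mod_cast hi)
        · simp [hij]
  have hU'diag : U' * Matrix.diagonal (fun i => if μ i = 0 then (0 : ℂ) else 1) = U' := by
    ext k i
    rw [Matrix.mul_diagonal]
    by_cases hi : μ i = 0
    · simp [hU'def, hudef, hi]
    · simp [hi]
  set P : Matrix (Fin n) (Fin n) ℂ := U' * U'ᴴ with hPdef
  have hPP : P * P = P := by
    calc P * P = U' * (U'ᴴ * U') * U'ᴴ := by simp only [hPdef, mul_assoc]
      _ = U' * U'ᴴ := by rw [hE, hU'diag]
  have hPH : Pᴴ = P := by
    rw [hPdef, Matrix.conjTranspose_mul, Matrix.conjTranspose_conjTranspose]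
  have h1P : (1 - P).PosSemidef := by
    have h2 : (1 - P)ᴴ * (1 - P) = 1 - P := by
      rw [Matrix.conjTranspose_sub, Matrix.conjTranspose_one, hPH, mul_sub, sub_mul, sub_mul,
        one_mul, mul_one, hPP]
      simp only [one_mul]
      abel
    have h3 := Matrix.posSemidef_conjTranspose_mul_self (1 - P)
    rwa [h2] at h3
  -- M - M² is positive semidefinite
  have hMM : (M - M * M).PosSemidef := by
    have h1 := hM1.mul_mul_conjTranspose_same hM.sqrt
    rw [hM.posSemidef_sqrt.1.eq] at h1
    have e2 : hM.sqrt * M * hM.sqrt = M * M := by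
      calc hM.sqrt * M * hM.sqrt = hM.sqrt * (hM.sqrt * hM.sqrt) * hM.sqrt := by
            rw [hM.sqrt_mul_self]
        _ = (hM.sqrt * hM.sqrt) * (hM.sqrt * hM.sqrt) := by simp only [mul_assoc]
        _ = M * M := by rw [hM.sqrt_mul_self]
    have e1 : hM.sqrt * (1 - M) * hM.sqrt = M - M * M := by
      rw [mul_sub, mul_one, sub_mul, hM.sqrt_mul_self, e2]
    rwa [e1] at h1
  -- step C : the w's have total square norm at most ε
  have keyC : ∑ i, ‖w i‖ ^ 2 ≤ ε := by
    have hWW : ∀ i, ‖w i‖ ^ 2 = (((Xᴴ * U')ᴴ * (Xᴴ * U')) i i).re := by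
      intro i
      rw [← inner_self_eq_norm_sq (𝕜 := ℂ)]
      congr 1
      try simp only [PiLp.inner_apply, RCLike.inner_apply, Matrix.mul_apply,
        Matrix.conjTranspose_apply, hwdef]
      exact congrArg Complex.re (Finset.sum_congr rfl fun j _ => mul_comm _ _)
    have htr1 : (((Xᴴ * U')ᴴ * (Xᴴ * U')).trace).re
        = ∑ i, (((Xᴴ * U')ᴴ * (Xᴴ * U')) i i).re := by
      rw [Matrix.trace, Complex.re_sum]
      rfl
    rw [Finset.sum_congr rfl fun i _ => hWW i, ← htr1]
    have e3 : (Xᴴ * U')ᴴ * (Xᴴ * U') = U'ᴴ * (X * (Xᴴ * U')) := by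
      rw [Matrix.conjTranspose_mul, Matrix.conjTranspose_conjTranspose]
      simp only [mul_assoc]
    have e4 : ((Xᴴ * U')ᴴ * (Xᴴ * U')).trace = ((X * Xᴴ) * P).trace := by
      rw [e3, Matrix.trace_mul_comm]
      congr 1
      simp only [hPdef, mul_assoc]
    rw [e4]
    have hXXH : (X * Xᴴ).PosSemidef := Matrix.posSemidef_self_mul_conjTranspose X
    have step1 : (((X * Xᴴ) * P).trace).re ≤ (((X * Xᴴ) * 1).trace).re :=
      aux_trace_mul_re_mono hXXH h1P
    rw [mul_one] at step1
    have e5 : X * Xᴴ = M * ρ * M := by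
      rw [hXdef, Matrix.conjTranspose_mul, hρ.posSemidef_sqrt.1.eq, hM.1.eq,
        mul_assoc, ← mul_assoc hρ.sqrt, hρ.sqrt_mul_self, ← mul_assoc]
    have e6 : (M * ρ * M).trace = (ρ * (M * M)).trace := by
      rw [Matrix.trace_mul_cycle, Matrix.trace_mul_comm]
    have step2 : ((ρ * (M * M)).trace).re ≤ ((ρ * M).trace).re :=
      aux_trace_mul_re_mono hρ hMM
    calc (((X * Xᴴ) * P).trace).re ≤ ((X * Xᴴ).trace).re := step1
      _ = ((ρ * (M * M)).trace).re := by rw [e5, e6]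
      _ ≤ ((ρ * M).trace).re := step2
      _ ≤ ε := htr
  -- assemble
  calc ∑ i, Real.sqrt (μ i) ≤ ∑ i, ‖w i‖ * ‖y i‖ := Finset.sum_le_sum fun i _ => keyA i
    _ ≤ Real.sqrt (∑ i, ‖w i‖ ^ 2) * Real.sqrt (∑ i, ‖y i‖ ^ 2) :=
        Real.sum_mul_le_sqrt_mul_sqrt _ _ _
    _ = Real.sqrt (∑ i, ‖w i‖ ^ 2) := by rw [keyB, Real.sqrt_one, mul_one]
    _ ≤ Real.sqrt ε := Real.sqrt_le_sqrt keyC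
end

section
/- Let ψ and φ be unit vectors in a Hilbert space and let M be an operator with 0 ≤ M ≤ I. Then |⟨ψ|M|ψ⟩ − ⟨φ|M|φ⟩| ≤ √(1 − |⟨ψ|φ⟩|²). -/
open Matrix ComplexOrder

private lemma cs_dot {n : ℕ} (u v : Fin n → ℂ) :
    ‖star u ⬝ᵥ v‖ ^ 2 ≤ (star u ⬝ᵥ u).re * (star v ⬝ᵥ v).re := by
  have h := @norm_inner_le_norm ℂ (EuclideanSpace ℂ (Fin n)) _ _ _
    ((WithLp.equiv 2 _).symm u) ((WithLp.equiv 2 _).symm v)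
  rw [show inner ℂ ((WithLp.equiv 2 (Fin n → ℂ)).symm u) ((WithLp.equiv 2 (Fin n → ℂ)).symm v)
    = star u ⬝ᵥ v from by rw [dotProduct_comm]; rfl] at h
  have hu : (star u ⬝ᵥ u : ℂ).re = ‖(WithLp.equiv 2 (Fin n → ℂ)).symm u‖ ^ 2 := by
    rw [norm_sq_eq_re_inner (𝕜 := ℂ), dotProduct_comm]; rfl
  have hv : (star v ⬝ᵥ v : ℂ).re = ‖(WithLp.equiv 2 (Fin n → ℂ)).symm v‖ ^ 2 := by
    rw [norm_sq_eq_re_inner (𝕜 := ℂ), dotProduct_comm]; rfl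
  rw [hu, hv]
  calc ‖star u ⬝ᵥ v‖ ^ 2
      ≤ (‖(WithLp.equiv 2 (Fin n → ℂ)).symm u‖ * ‖(WithLp.equiv 2 (Fin n → ℂ)).symm v‖) ^ 2 := by
        apply pow_le_pow_left₀ (norm_nonneg _) h
    _ = _ := by ring

open scoped MatrixOrder in
private lemma sqrt_split {n : ℕ} {N : Matrix (Fin n) (Fin n) ℂ} (hN : N.PosSemidef)
    (x y : Fin n → ℂ) :
    star x ⬝ᵥ N *ᵥ y = star (CFC.sqrt N *ᵥ x) ⬝ᵥ (CFC.sqrt N *ᵥ y) := by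
  rw [star_mulVec, ← dotProduct_mulVec, mulVec_mulVec, (CFC.sqrt_nonneg N).posSemidef.1,
    CFC.sqrt_mul_sqrt_self N hN.nonneg]

private lemma psd_cs {n : ℕ} {N : Matrix (Fin n) (Fin n) ℂ} (hN : N.PosSemidef)
    (x y : Fin n → ℂ) :
    ‖star x ⬝ᵥ N *ᵥ y‖ ^ 2 ≤ (star x ⬝ᵥ N *ᵥ x).re * (star y ⬝ᵥ N *ᵥ y).re := by
  rw [sqrt_split hN x y, sqrt_split hN x x, sqrt_split hN y y]
  exact cs_dot _ _

set_option maxHeartbeats 1000000 in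
private lemma aux1 (a D T s μ : ℝ) (ha0 : 0 ≤ a) (ha1 : a ≤ 1) (hD0 : 0 ≤ D)
    (hDT : D ≤ T^2) (hμ0 : 0 ≤ μ) (h1 : μ^2 ≤ a*D) (h2 : μ^2 ≤ (1-a)*(T^2-D))
    (hs : 0 ≤ s) (hT : 0 ≤ T) (hst : s^2 + T^2 = 1) :
    |T^2*a - D| + 2*s*μ ≤ T := by
  have e1 : 4*(T^2*(1-a))*D ≤ (T^2*(1-a)+D)^2 := by nlinarith [sq_nonneg (T^2*(1-a)-D)]
  have e2 : 4*(T^2*a)*(T^2-D) ≤ (T^2*a+(T^2-D))^2 := by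
    nlinarith [sq_nonneg (T^2*a-(T^2-D))]
  have e3 : μ^2*μ^2 ≤ (a*D)*((1-a)*(T^2-D)) :=
    mul_le_mul h1 h2 (sq_nonneg μ) (mul_nonneg ha0 hD0)
  have hru : (0:ℝ) ≤ 4*(T^2*a)*(T^2-D) := by
    have : (0:ℝ) ≤ T^2 - D := by linarith
    positivity
  have hRnn : (0:ℝ) ≤ (T^2*(1-a)+D)*(T^2*a+(T^2-D)) := by nlinarith
  have h4 : (4*(μ*T)^2)^2 ≤ ((T^2*(1-a)+D)*(T^2*a+(T^2-D)))^2 := by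
    calc (4*(μ*T)^2)^2 = 16*(T^2*T^2)*(μ^2*μ^2) := by ring
      _ ≤ 16*(T^2*T^2)*((a*D)*((1-a)*(T^2-D))) := by
          apply mul_le_mul_of_nonneg_left e3 (by positivity)
      _ = (4*(T^2*(1-a))*D) * (4*(T^2*a)*(T^2-D)) := by ring
      _ ≤ (T^2*(1-a)+D)^2 * (T^2*a+(T^2-D))^2 :=
          mul_le_mul e1 e2 hru (sq_nonneg _)
      _ = ((T^2*(1-a)+D)*(T^2*a+(T^2-D)))^2 := by ring
  have key : 4*(μ*T)^2 ≤ (T^2*(1-a)+D)*(T^2*a+(T^2-D)) :=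
    le_of_pow_le_pow_left₀ two_ne_zero hRnn h4
  have key2 : (T^2*a - D)^2 + 4*(μ*T)^2 ≤ T^2*T^2 := by nlinarith [key]
  -- Cauchy–Schwarz in ℝ²
  set X := |T ^ 2 * a - D| with hX
  have hXnn : 0 ≤ X := abs_nonneg _
  have hXsq : X ^ 2 = (T ^ 2 * a - D) ^ 2 := sq_abs _
  have hE2 : (X * T + (2 * (μ * T)) * s) ^ 2 ≤ T ^ 2 * T ^ 2 := by
    nlinarith [sq_nonneg (X * s - (2 * (μ * T)) * T), sq_nonneg s, sq_nonneg T]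
  have hE : X * T + (2 * (μ * T)) * s ≤ T ^ 2 := by
    have hEnn : 0 ≤ X * T + (2 * (μ * T)) * s := by positivity
    refine le_of_pow_le_pow_left₀ two_ne_zero (sq_nonneg T) ?_
    calc (X * T + (2 * (μ * T)) * s) ^ 2 ≤ T ^ 2 * T ^ 2 := hE2
      _ = (T ^ 2) ^ 2 := by ring
  rcases eq_or_lt_of_le hT with hT0 | hT0
  · have hT0' : T = 0 := hT0.symm
    subst hT0'
    have hD' : D = 0 := le_antisymm (by linarith [hDT, sq_nonneg (0:ℝ)]) hD0
    have hμ' : μ = 0 := by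
      have hμ2 : μ ^ 2 ≤ 0 := by rw [hD'] at h1; linarith [h1]
      have := sq_nonneg μ
      nlinarith
    simp [hX, hD', hμ']
  · have h5 : (X + 2 * s * μ) * T ≤ T * T := by
      calc (X + 2 * s * μ) * T = X * T + (2 * (μ * T)) * s := by ring
        _ ≤ T ^ 2 := hE
        _ = T * T := by ring
    exact le_of_mul_le_mul_right h5 hT0

private lemma psd_real {n : ℕ} {N : Matrix (Fin n) (Fin n) ℂ} (hN : N.PosSemidef)
    (x : Fin n → ℂ) :
    star x ⬝ᵥ N *ᵥ x = ((star x ⬝ᵥ N *ᵥ x).re : ℂ) ∧ 0 ≤ (star x ⬝ᵥ N *ᵥ x).re := by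
  have h := hN.dotProduct_mulVec_nonneg x
  rw [Complex.nonneg_iff] at h
  refine ⟨(Complex.ext (by simp) (by simp [← h.2])).symm, h.1⟩

private lemma herm_conj {n : ℕ} {N : Matrix (Fin n) (Fin n) ℂ} (hN : N.IsHermitian)
    (x y : Fin n → ℂ) :
    star y ⬝ᵥ N *ᵥ x = starRingEnd ℂ (star x ⬝ᵥ N *ᵥ y) := by
  have h : star (star x ⬝ᵥ N *ᵥ y) = star y ⬝ᵥ N *ᵥ x := by
    rw [← star_dotProduct, star_mulVec, ← dotProduct_mulVec, hN.eq]
  rw [← h]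
  rfl

/-- For unit vectors `ψ, φ` and `0 ≤ M ≤ 1`,
`|⟨ψ|M|ψ⟩ − ⟨φ|M|φ⟩| ≤ √(1 − |⟨ψ|φ⟩|²)`. -/
theorem stmt_1 {n : ℕ} (M : Matrix (Fin n) (Fin n) ℂ) (ψ φ : Fin n → ℂ)
    (hψ : star ψ ⬝ᵥ ψ = 1) (hφ : star φ ⬝ᵥ φ = 1)
    (hM : M.PosSemidef) (hM1 : (1 - M).PosSemidef) :
    ‖(star ψ ⬝ᵥ M.mulVec ψ) - (star φ ⬝ᵥ M.mulVec φ)‖ ≤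
      Real.sqrt (1 - ‖star ψ ⬝ᵥ φ‖ ^ 2) := by
  classical
  set c : ℂ := star ψ ⬝ᵥ φ with hc
  set w : Fin n → ℂ := φ - c • ψ with hw
  have hφw : φ = c • ψ + w := by simp [hw]
  have hsw : star ψ ⬝ᵥ w = 0 := by
    simp [hw, dotProduct_sub, dotProduct_smul, hψ, hc]
  have hws : star w ⬝ᵥ ψ = 0 := by
    rw [star_dotProduct, hsw, star_zero]
  have hφψ : star φ ⬝ᵥ ψ = starRingEnd ℂ c := by
    rw [star_dotProduct]; rfl
  set s : ℝ := ‖c‖ with hs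
  have hsnn : 0 ≤ s := norm_nonneg c
  have hcc : starRingEnd ℂ c * c = ((s ^ 2 : ℝ) : ℂ) := by
    rw [mul_comm, Complex.mul_conj, Complex.normSq_eq_norm_sq]
  have hww : star w ⬝ᵥ w = ((1 - s ^ 2 : ℝ) : ℂ) := by
    conv_lhs => rw [hw]
    simp only [star_sub, star_smul, sub_dotProduct, dotProduct_sub, smul_dotProduct,
      dotProduct_smul, hφ, hψ, smul_eq_mul, mul_one, hφψ, Complex.star_def]
    rw [← hc]
    have hcc' := hcc
    push_cast at hcc' ⊢
    linear_combination (- 1 : ℂ) * hcc'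
  -- real diagonal quantities
  set a : ℝ := (star ψ ⬝ᵥ M *ᵥ ψ).re with ha
  set D : ℝ := (star w ⬝ᵥ M *ᵥ w).re with hD
  obtain ⟨haC, ha0⟩ := psd_real hM ψ
  obtain ⟨hDC, hD0⟩ := psd_real hM w
  rw [← ha] at haC ha0
  rw [← hD] at hDC hD0
  set m : ℂ := star ψ ⬝ᵥ M *ᵥ w with hm
  set μ : ℝ := ‖m‖ with hμ
  have hμ0 : 0 ≤ μ := norm_nonneg m
  -- bounds from 1 - M
  have hsub : ∀ x y : Fin n → ℂ, star x ⬝ᵥ (1 - M) *ᵥ y = star x ⬝ᵥ y - star x ⬝ᵥ M *ᵥ y := by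
    intro x y
    rw [sub_mulVec, one_mulVec, dotProduct_sub]
  have ha1 : a ≤ 1 := by
    have h := hM1.dotProduct_mulVec_nonneg ψ
    rw [hsub, hψ, haC, Complex.nonneg_iff] at h
    have h' := h.1
    simp only [Complex.sub_re, Complex.one_re, Complex.ofReal_re] at h'
    linarith
  have hD1 : D ≤ 1 - s ^ 2 := by
    have h := hM1.dotProduct_mulVec_nonneg w
    rw [hsub, hww, hDC, Complex.nonneg_iff] at h
    have h' := h.1
    simp only [Complex.sub_re, Complex.ofReal_re] at h'
    linarith
  -- Cauchy–Schwarz bounds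
  have hcs1 : μ ^ 2 ≤ a * D := by
    have h := psd_cs hM ψ w
    rwa [haC, hDC, Complex.ofReal_re, Complex.ofReal_re] at h
  have hcs2 : μ ^ 2 ≤ (1 - a) * ((1 - s ^ 2) - D) := by
    have h := psd_cs hM1 ψ w
    rw [hsub ψ w, hsub ψ ψ, hsub w w, hsw, hψ, hww, haC, hDC, zero_sub, norm_neg] at h
    simp only [Complex.sub_re, Complex.one_re, Complex.ofReal_re] at h
    exact h
  have hs1 : s ^ 2 ≤ 1 := by
    have h := cs_dot ψ φ
    rw [hψ, hφ] at h
    simp only [Complex.one_re, mul_one] at h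
    rw [hs, hc]
    exact h
  -- expand ⟨φ|M|φ⟩
  have hwψ : star w ⬝ᵥ M *ᵥ ψ = starRingEnd ℂ m := herm_conj hM.1 ψ w
  have hexp : star φ ⬝ᵥ M.mulVec φ
      = ((s ^ 2 : ℝ) : ℂ) * ((a : ℝ) : ℂ) + (starRingEnd ℂ c * m + c * starRingEnd ℂ m)
        + ((D : ℝ) : ℂ) := by
    rw [show M.mulVec φ = M *ᵥ φ from rfl]
    conv_lhs => rw [hφw]
    simp only [mulVec_add, mulVec_smul, star_add, star_smul, add_dotProduct, dotProduct_add,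
      smul_dotProduct, dotProduct_smul, smul_eq_mul, Complex.star_def]
    rw [hwψ, haC, hDC]
    linear_combination ((a : ℝ) : ℂ) * hcc
  -- the difference
  set z : ℂ := starRingEnd ℂ c * m with hz
  have hdiff : (star ψ ⬝ᵥ M.mulVec ψ) - (star φ ⬝ᵥ M.mulVec φ)
      = (((1 - s ^ 2) * a - D : ℝ) : ℂ) - (z + starRingEnd ℂ z) := by
    rw [hexp, show star ψ ⬝ᵥ M.mulVec ψ = star ψ ⬝ᵥ M *ᵥ ψ from rfl, haC]
    rw [hz, _root_.map_mul, starRingEnd_self_apply]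
    push_cast
    ring
  have habsz : ‖z + starRingEnd ℂ z‖ ≤ 2 * s * μ := by
    rw [Complex.add_conj]
    have h1 : |z.re| ≤ ‖z‖ := Complex.abs_re_le_norm z
    have h2 : ‖z‖ = s * μ := by
      rw [hz, norm_mul, Complex.norm_conj, ← hs, ← hμ]
    rw [h2] at h1
    rw [show ((2 * z.re : ℝ) : ℂ) = ((2 * z.re : ℝ) : ℂ) from rfl, Complex.norm_real, Real.norm_eq_abs]
    have h3 : |2 * z.re| = 2 * |z.re| := by rw [abs_mul]; norm_num
    rw [h3]
    nlinarith [hsnn, hμ0]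
  -- put it together
  set T : ℝ := Real.sqrt (1 - s ^ 2) with hT
  have hTnn : 0 ≤ T := Real.sqrt_nonneg _
  have hT2 : T ^ 2 = 1 - s ^ 2 := Real.sq_sqrt (by linarith)
  have hst : s ^ 2 + T ^ 2 = 1 := by rw [hT2]; ring
  have haux := aux1 a D T s μ ha0 ha1 hD0 (by rw [hT2]; exact hD1) hμ0
    hcs1 (by rw [hT2]; exact hcs2) hsnn hTnn hst
  rw [hT2] at haux
  calc ‖(star ψ ⬝ᵥ M.mulVec ψ) - (star φ ⬝ᵥ M.mulVec φ)‖
      ≤ ‖((((1 - s ^ 2) * a - D : ℝ) : ℂ))‖ + ‖z + starRingEnd ℂ z‖ := by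
        rw [hdiff]; exact norm_sub_le _ _
    _ ≤ |(1 - s ^ 2) * a - D| + 2 * s * μ := by
        rw [Complex.norm_real, Real.norm_eq_abs]; linarith [habsz]
    _ ≤ T := haux
end

section
/- Let M₀ be an operator with 0 ≤ M₀ ≤ I and let ψ, φ be unit vectors such that ⟨ψ|M₀|ψ⟩ − ⟨φ|M₀|φ⟩ ≥ 1 − δ for some δ ∈ [0,1]. Then |⟨ψ|φ⟩| ≤ √(2δ − δ²). -/
open Matrix ComplexOrder

open scoped MatrixOrder in
private lemma cs_aux {n : ℕ} {A : Matrix (Fin n) (Fin n) ℂ} (hA : A.PosSemidef)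
    (u v : Fin n → ℂ) :
    ‖star u ⬝ᵥ A.mulVec v‖ ≤
      Real.sqrt (star u ⬝ᵥ A.mulVec u).re * Real.sqrt (star v ⬝ᵥ A.mulVec v).re := by
  have hS := (CFC.sqrt_nonneg A).posSemidef
  have key : ∀ w z : Fin n → ℂ, star w ⬝ᵥ A.mulVec z
      = star ((CFC.sqrt A).mulVec w) ⬝ᵥ ((CFC.sqrt A).mulVec z) := by
    intro w z
    rw [Matrix.star_mulVec, hS.1, ← Matrix.dotProduct_mulVec, Matrix.mulVec_mulVec,
      CFC.sqrt_mul_sqrt_self A hA.nonneg]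
  set x : EuclideanSpace ℂ (Fin n) := (WithLp.equiv 2 _).symm ((CFC.sqrt A).mulVec u)
  set y : EuclideanSpace ℂ (Fin n) := (WithLp.equiv 2 _).symm ((CFC.sqrt A).mulVec v)
  have hinner : ∀ p q : Fin n → ℂ,
      (inner ℂ ((WithLp.equiv 2 (Fin n → ℂ)).symm p) ((WithLp.equiv 2 (Fin n → ℂ)).symm q) : ℂ)
        = star p ⬝ᵥ q := fun p q => by
    rw [EuclideanSpace.inner_toLp_toLp, dotProduct_comm]
    rfl
  calc ‖star u ⬝ᵥ A.mulVec v‖ = ‖(inner ℂ x y : ℂ)‖ := by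
        rw [key, hinner]
    _ ≤ ‖x‖ * ‖y‖ := norm_inner_le_norm x y
    _ = Real.sqrt (star u ⬝ᵥ A.mulVec u).re * Real.sqrt (star v ⬝ᵥ A.mulVec v).re := by
        rw [@norm_eq_sqrt_re_inner ℂ, @norm_eq_sqrt_re_inner ℂ, key u u, key v v, ← hinner, ← hinner]
        rfl

/-- If `0 ≤ M₀ ≤ 1` and unit vectors `ψ, φ` satisfy `⟨ψ|M₀|ψ⟩ − ⟨φ|M₀|φ⟩ ≥ 1 − δ`,
then `|⟨ψ|φ⟩| ≤ √(2δ − δ²)`. -/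
theorem stmt_4 {n : ℕ} (M₀ : Matrix (Fin n) (Fin n) ℂ) (ψ φ : Fin n → ℂ) (δ : ℝ)
    (hψ : star ψ ⬝ᵥ ψ = 1) (hφ : star φ ⬝ᵥ φ = 1)
    (hM : M₀.PosSemidef) (hM1 : (1 - M₀).PosSemidef)
    (hδ : δ ∈ Set.Icc (0 : ℝ) 1)
    (hgap : 1 - δ ≤ (star ψ ⬝ᵥ M₀.mulVec ψ).re - (star φ ⬝ᵥ M₀.mulVec φ).re) :
    ‖star ψ ⬝ᵥ φ‖ ≤ Real.sqrt (2 * δ - δ ^ 2) := by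
  set a := (star ψ ⬝ᵥ M₀.mulVec ψ).re with ha
  set b := (star φ ⬝ᵥ M₀.mulVec φ).re with hb
  have hsub : ∀ w z : Fin n → ℂ, star w ⬝ᵥ (1 - M₀).mulVec z
      = star w ⬝ᵥ z - star w ⬝ᵥ M₀.mulVec z := by
    intro w z
    rw [Matrix.sub_mulVec, dotProduct_sub, Matrix.one_mulVec]
  have haψ : (star ψ ⬝ᵥ (1 - M₀).mulVec ψ).re = 1 - a := by
    rw [hsub, Complex.sub_re, hψ]; simp [ha]
  have hbφ : (star φ ⬝ᵥ (1 - M₀).mulVec φ).re = 1 - b := by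
    rw [hsub, Complex.sub_re, hφ]; simp [hb]
  have ha0 : 0 ≤ a := hM.re_dotProduct_nonneg ψ
  have hb0 : 0 ≤ b := hM.re_dotProduct_nonneg φ
  have ha1 : a ≤ 1 := by have := hM1.re_dotProduct_nonneg ψ; rw [RCLike.re_to_complex, haψ] at this; linarith
  have hb1 : b ≤ 1 := by have := hM1.re_dotProduct_nonneg φ; rw [RCLike.re_to_complex, hbφ] at this; linarith
  -- split the inner product
  have hsplit : star ψ ⬝ᵥ φ = star ψ ⬝ᵥ M₀.mulVec φ + star ψ ⬝ᵥ (1 - M₀).mulVec φ := by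
    rw [hsub, Matrix.dotProduct_mulVec]; ring
  have h1 := cs_aux hM ψ φ
  have h2 := cs_aux hM1 ψ φ
  rw [haψ, hbφ] at h2
  have habs : ‖star ψ ⬝ᵥ φ‖
      ≤ Real.sqrt a * Real.sqrt b + Real.sqrt (1 - a) * Real.sqrt (1 - b) := by
    rw [hsplit]
    exact (norm_add_le _ _).trans (add_le_add h1 h2)
  refine habs.trans ?_
  -- real inequality
  obtain ⟨hδ0, hδ1⟩ := hδ
  have hrq : (Real.sqrt a * Real.sqrt b + Real.sqrt (1 - a) * Real.sqrt (1 - b)) ^ 2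
      ≤ 2 * δ - δ ^ 2 := by
    have sa := Real.sq_sqrt ha0
    have sb := Real.sq_sqrt hb0
    have sa1 := Real.sq_sqrt (by linarith : (0:ℝ) ≤ 1 - a)
    have sb1 := Real.sq_sqrt (by linarith : (0:ℝ) ≤ 1 - b)
    nlinarith [sq_nonneg (Real.sqrt a * Real.sqrt (1 - a) - Real.sqrt b * Real.sqrt (1 - b)),
      sq_nonneg (a - b - 1), sq_nonneg (a - b - (1 - δ)),
      Real.sqrt_nonneg a, Real.sqrt_nonneg b, Real.sqrt_nonneg (1 - a), Real.sqrt_nonneg (1 - b)]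
  have hnn : 0 ≤ Real.sqrt a * Real.sqrt b + Real.sqrt (1 - a) * Real.sqrt (1 - b) := by
    positivity
  calc Real.sqrt a * Real.sqrt b + Real.sqrt (1 - a) * Real.sqrt (1 - b)
      = Real.sqrt ((Real.sqrt a * Real.sqrt b + Real.sqrt (1 - a) * Real.sqrt (1 - b)) ^ 2) := by
        rw [Real.sqrt_sq hnn]
    _ ≤ Real.sqrt (2 * δ - δ ^ 2) := Real.sqrt_le_sqrt hrq
end

section
/- (Trigonometric moment problem / Herglotz) Let γ be an N×N positive semidefinite complex matrix that is Toeplitz, i.e. γ_{jk} = g(k−j) for some function g: {−(N−1),…,N−1} → ℂ. Then there exists a finite positive Borel measure μ on the unit circle such that g(m) = ∫ z^m dμ(z) for all |m| ≤ N−1. -/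
open MeasureTheory Matrix ComplexOrder

section AuxMomentProblem

open Module

local notation "⟪" x ", " y "⟫" => inner (𝕜 := ℂ) x y


/-- Two linear maps with pointwise-equal norms into a finite-dimensional inner product space
are related by a linear isometry of the target. -/
lemma exists_isometry_comp {F E : Type*} [NormedAddCommGroup E] [InnerProductSpace ℂ E]
    [FiniteDimensional ℂ E] [AddCommGroup F] [Module ℂ F]
    (B C : F →ₗ[ℂ] E) (h : ∀ x, ‖B x‖ = ‖C x‖) :
    ∃ U : E →ₗᵢ[ℂ] E, ∀ x, U (B x) = C x := by
  have hker : LinearMap.ker B ≤ LinearMap.ker C := by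
    intro x hx
    rw [LinearMap.mem_ker] at hx ⊢
    have := h x
    rw [hx, norm_zero] at this
    exact (norm_eq_zero.mp this.symm)
  let q : (F ⧸ LinearMap.ker B) →ₗ[ℂ] E := (LinearMap.ker B).liftQ C hker
  let e : (F ⧸ LinearMap.ker B) ≃ₗ[ℂ] LinearMap.range B := B.quotKerEquivRange
  let L0 : LinearMap.range B →ₗ[ℂ] E := q ∘ₗ (e.symm : LinearMap.range B →ₗ[ℂ] _)
  have key : ∀ x : F, L0 ⟨B x, LinearMap.mem_range_self B x⟩ = C x := by
    intro x
    have h1 : e.symm ⟨B x, LinearMap.mem_range_self B x⟩ = Submodule.Quotient.mk x :=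
      B.quotKerEquivRange_symm_apply_image x (LinearMap.mem_range_self B x)
    simp only [L0, LinearMap.comp_apply, LinearEquiv.coe_coe, h1]
    exact Submodule.liftQ_apply _ C x
  have hnorm : ∀ v : LinearMap.range B, ‖L0 v‖ = ‖v‖ := by
    rintro ⟨v, hv⟩
    obtain ⟨x, rfl⟩ := hv
    rw [key x]
    exact (h x).symm
  let L : (LinearMap.range B) →ₗᵢ[ℂ] E := ⟨L0, hnorm⟩
  refine ⟨L.extend, fun x => ?_⟩
  have := L.extend_apply ⟨B x, LinearMap.mem_range_self B x⟩
  rw [this]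
  exact key x


/-- Moments of a vector under a linear isometry of a finite-dimensional complex inner product
space are moments of a positive atomic measure on the unit circle. -/
lemma exists_atoms {E : Type*} [NormedAddCommGroup E] [InnerProductSpace ℂ E]
    [FiniteDimensional ℂ E] (U : E →ₗᵢ[ℂ] E) (x : E) :
    ∃ (s : Finset ℂ) (w : ℂ → ℝ), (∀ z ∈ s, ‖z‖ = 1) ∧ (∀ z ∈ s, 0 ≤ w z) ∧
      ∀ m : ℕ, ⟪x, (U.toLinearMap ^ m) x⟫ = ∑ z ∈ s, (w z : ℂ) * z ^ m := by
  set u : End ℂ E := U.toLinearMap with hu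
  have hun : ∀ y : E, ‖u y‖ = ‖y‖ := fun y => U.norm_map y
  have huin : ∀ y y' : E, ⟪u y, u y'⟫ = ⟪y, y'⟫ := fun y y' => U.inner_map_map y y'
  set W : Submodule ℂ E := ⨆ z : ℂ, u.eigenspace z with hW
  -- every element of W is in the image of W under u
  have hsur : ∀ w ∈ W, ∃ w' ∈ W, u w' = w := by
    intro w hw
    refine Submodule.iSup_induction (motive := fun w => ∃ w' ∈ W, u w' = w) _ hw ?_ ?_ ?_
    · intro z v hv
      rcases eq_or_ne v 0 with rfl | hvne
      · exact ⟨0, zero_mem _, map_zero u⟩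
      · have hzv : u v = z • v := (Module.End.mem_eigenspace_iff).mp hv
        have hzne : z ≠ 0 := by
          rintro rfl
          rw [zero_smul] at hzv
          have := hun v
          rw [hzv, norm_zero] at this
          exact hvne (norm_eq_zero.mp this.symm)
        refine ⟨z⁻¹ • v, ?_, ?_⟩
        · exact Submodule.mem_iSup_of_mem z (Submodule.smul_mem _ _ hv)
        · rw [LinearMap.map_smul, hzv, smul_smul, inv_mul_cancel₀ hzne, one_smul]
    · exact ⟨0, zero_mem _, map_zero u⟩
    · rintro a b ⟨a', ha', rfl⟩ ⟨b', hb', rfl⟩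
      exact ⟨a' + b', add_mem ha' hb', map_add u a' b'⟩
  -- W^⊥ is u-invariant
  have hinv : ∀ v ∈ Wᗮ, u v ∈ Wᗮ := by
    intro v hv
    rw [Submodule.mem_orthogonal]
    intro w hw
    obtain ⟨w', hw', rfl⟩ := hsur w hw
    rw [huin]
    exact hv w' hw'
  -- W = ⊤
  have hWtop : W = ⊤ := by
    by_contra hne
    have hbot : Wᗮ ≠ ⊥ := fun hb => hne ((Submodule.orthogonal_eq_bot_iff).mp hb)
    have : Nontrivial Wᗮ := Submodule.nontrivial_iff_ne_bot.mpr hbot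
    obtain ⟨z, hz⟩ := Module.End.exists_eigenvalue (u.restrict hinv)
    obtain ⟨v, hv⟩ := hz.exists_hasEigenvector
    have hv0 : (v : E) ≠ 0 := fun h => hv.2 (Subtype.ext h)
    have huv : u (v : E) = z • (v : E) := by
      have := hv.apply_eq_smul
      have h2 := congrArg (Submodule.subtype Wᗮ) this
      simpa [LinearMap.restrict_apply] using h2
    have hvW : (v : E) ∈ W :=
      Submodule.mem_iSup_of_mem z ((Module.End.mem_eigenspace_iff).mpr huv)
    have : (v : E) = 0 := by
      have := v.2 (v : E) hvW
      exact inner_self_eq_zero.mp this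
    exact hv0 this
  -- decompose x
  have hx : x ∈ W := hWtop ▸ Submodule.mem_top
  rw [hW, Submodule.mem_iSup_iff_exists_finsupp] at hx
  obtain ⟨c, hc, hcsum⟩ := hx
  refine ⟨c.support, fun z => ‖c z‖ ^ 2, ?_, ?_, ?_⟩
  · intro z hz
    have hczne : c z ≠ 0 := Finsupp.mem_support_iff.mp hz
    have h1 : u (c z) = z • c z := (Module.End.mem_eigenspace_iff).mp (hc z)
    have h2 := hun (c z)
    rw [h1, norm_smul] at h2
    have : ‖z‖ = 1 := by
      have hcz : ‖c z‖ ≠ 0 := norm_ne_zero_iff.mpr hczne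
      exact mul_right_cancel₀ hcz (h2.trans (one_mul ‖c z‖).symm)
    exact this
  · intro z _; positivity
  · -- moments
    have habs : ∀ z ∈ c.support, ‖z‖ = 1 := by
      intro z hz
      have hczne : c z ≠ 0 := Finsupp.mem_support_iff.mp hz
      have h1 : u (c z) = z • c z := (Module.End.mem_eigenspace_iff).mp (hc z)
      have h2 := hun (c z)
      rw [h1, norm_smul] at h2
      have hcz : ‖c z‖ ≠ 0 := norm_ne_zero_iff.mpr hczne
      have : ‖z‖ = 1 := mul_right_cancel₀ hcz (h2.trans (one_mul ‖c z‖).symm)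
      exact this
    have horth : ∀ z ∈ c.support, ∀ w ∈ c.support, z ≠ w → ⟪c z, c w⟫ = 0 := by
      intro z hz w hw hzw
      have h1 : u (c z) = z • c z := (Module.End.mem_eigenspace_iff).mp (hc z)
      have h2 : u (c w) = w • c w := (Module.End.mem_eigenspace_iff).mp (hc w)
      have h3 := huin (c z) (c w)
      rw [h1, h2, inner_smul_left, inner_smul_right] at h3
      by_contra hne
      have h4 : ((starRingEnd ℂ) z * w) * (inner ℂ (c z) (c w) : ℂ)
          = 1 * (inner ℂ (c z) (c w) : ℂ) := by
        rw [mul_assoc, h3, one_mul]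
      have hzw1 : (starRingEnd ℂ) z * w = 1 := mul_right_cancel₀ hne h4
      have hz1 : (starRingEnd ℂ) z * z = 1 := by
        have : ‖z‖ = 1 := habs z hz
        rw [mul_comm, Complex.mul_conj, Complex.normSq_eq_norm_sq, this]
        norm_num
      have : z = w := by
        have hczne : (starRingEnd ℂ) z ≠ 0 := by
          simp only [ne_eq, map_eq_zero]
          intro h
          rw [h] at hz1; simp at hz1
        exact mul_left_cancel₀ hczne (hz1.trans hzw1.symm)
      exact hzw this
    have hxsum : x = ∑ z ∈ c.support, c z := by
      rw [← hcsum, Finsupp.sum]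
    have hupow : ∀ m : ℕ, (u ^ m) x = ∑ z ∈ c.support, z ^ m • c z := by
      intro m
      induction m with
      | zero => simpa using hxsum
      | succ m ih =>
        rw [pow_succ', Module.End.mul_apply, ih, map_sum]
        refine Finset.sum_congr rfl fun z hz => ?_
        rw [LinearMap.map_smul, (Module.End.mem_eigenspace_iff).mp (hc z), smul_smul, ← pow_succ]
    intro m
    rw [hupow m]
    conv_lhs => rw [hxsum]
    rw [sum_inner]
    rw [Finset.sum_congr rfl (fun z hz => inner_sum (𝕜 := ℂ) c.support _ (c z))]
    rw [Finset.sum_comm]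
    refine Finset.sum_congr rfl fun z hz => ?_
    rw [Finset.sum_eq_single z (fun w hw hne =>
      by rw [inner_smul_right, horth w hw z hz hne, mul_zero]) (fun h => absurd hz h)]
    rw [inner_smul_right, inner_self_eq_norm_sq_to_K, mul_comm]
    norm_cast

/-- (Trigonometric moment problem / Herglotz) A positive semidefinite Toeplitz matrix
`γ_{jk} = g(k−j)` arises from moments of a finite positive measure on the unit circle. -/
theorem stmt_11 (N : ℕ) (γ : Matrix (Fin N) (Fin N) ℂ) (g : ℤ → ℂ)
    (hγ : γ.PosSemidef)
    (hT : ∀ j k : Fin N, γ j k = g (((k : ℕ) : ℤ) - ((j : ℕ) : ℤ))) :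
    ∃ μ : Measure ℂ, IsFiniteMeasure μ ∧
      μ {z : ℂ | ‖z‖ ≠ 1} = 0 ∧
      ∀ m : ℤ, |m| ≤ (N : ℤ) - 1 → g m = ∫ z, z ^ m ∂μ := by
  rcases Nat.eq_zero_or_pos N with rfl | hN
  · refine ⟨0, inferInstance, rfl, fun m hm => absurd hm ?_⟩
    have := abs_nonneg m
    push_cast
    omega
  -- setup
  open MatrixOrder in set A := CFC.sqrt γ with hAdef
  have hA : A * A = γ := by open MatrixOrder in exact CFC.sqrt_mul_sqrt_self γ hγ.nonneg
  have hAH : Aᴴ = A := by open MatrixOrder in exact (CFC.sqrt_nonneg γ).posSemidef.1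
  set E := EuclideanSpace ℂ (Fin N) with hE
  let f : ℕ → E := fun n => WithLp.toLp 2 (A.mulVec (fun i => if (i : ℕ) = n then 1 else 0) : Fin N → ℂ)
  have hfapply : ∀ (n : ℕ) (hn : n < N) (i : Fin N), f n i = A i ⟨n, hn⟩ := by
    intro n hn i
    show (A.mulVec fun i => if (i : ℕ) = n then 1 else 0) i = A i ⟨n, hn⟩
    rw [Matrix.mulVec, dotProduct, Finset.sum_eq_single (⟨n, hn⟩ : Fin N)]
    · simp
    · intro b _ hb
      have : (b : ℕ) ≠ n := fun h => hb (Fin.ext h)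
      simp [this]
    · simp
  have hinner : ∀ (a b : ℕ) (ha : a < N) (hb : b < N),
      ⟪f a, f b⟫ = γ ⟨a, ha⟩ ⟨b, hb⟩ := by
    intro a b ha hb
    rw [PiLp.inner_apply]
    simp only [RCLike.inner_apply, hfapply a ha, hfapply b hb]
    have h1 : γ ⟨a, ha⟩ ⟨b, hb⟩ = (Aᴴ * A) ⟨a, ha⟩ ⟨b, hb⟩ := by rw [hAH, hA]
    rw [h1, Matrix.mul_apply]
    exact Finset.sum_congr rfl fun i _ => by rw [Matrix.conjTranspose_apply]; exact mul_comm _ _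
  -- Toeplitz: entries only depend on the difference
  have hg : ∀ (a b : ℕ) (ha : a < N) (hb : b < N),
      γ ⟨a, ha⟩ ⟨b, hb⟩ = g ((b : ℤ) - (a : ℤ)) := by
    intro a b ha hb
    simpa using hT ⟨a, ha⟩ ⟨b, hb⟩
  -- the shift isometry
  let J : Finset (Fin N) := Finset.univ.filter fun j : Fin N => (j : ℕ) < N - 1
  let Bl : (Fin N → ℂ) →ₗ[ℂ] E := ∑ j ∈ J, (LinearMap.proj j).smulRight (f (j : ℕ))
  let Cl : (Fin N → ℂ) →ₗ[ℂ] E := ∑ j ∈ J, (LinearMap.proj j).smulRight (f ((j : ℕ) + 1))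
  have hBl : ∀ x, Bl x = ∑ j ∈ J, x j • f (j : ℕ) := by
    intro x
    simp [Bl, LinearMap.sum_apply]
  have hCl : ∀ x, Cl x = ∑ j ∈ J, x j • f ((j : ℕ) + 1) := by
    intro x
    simp [Cl, LinearMap.sum_apply]
  have hff : ∀ j ∈ J, ∀ k ∈ J, ⟪f (j : ℕ), f (k : ℕ)⟫ = ⟪f ((j : ℕ) + 1), f ((k : ℕ) + 1)⟫ := by
    intro j hj k hk
    have hjl : (j : ℕ) < N - 1 := by simpa [J] using hj
    have hkl : (k : ℕ) < N - 1 := by simpa [J] using hk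
    have hj1 : (j : ℕ) + 1 < N := by omega
    have hk1 : (k : ℕ) + 1 < N := by omega
    rw [hinner _ _ j.2 k.2, hinner _ _ hj1 hk1, hg _ _ j.2 k.2, hg _ _ hj1 hk1]
    congr 1
    push_cast
    ring
  have hIn : ∀ x : Fin N → ℂ, ⟪Bl x, Bl x⟫ = ⟪Cl x, Cl x⟫ := by
    intro x
    rw [hBl, hCl, sum_inner, sum_inner]
    refine Finset.sum_congr rfl fun j hj => ?_
    rw [inner_sum, inner_sum]
    refine Finset.sum_congr rfl fun k hk => ?_
    rw [inner_smul_left, inner_smul_left, inner_smul_right, inner_smul_right,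
      hff j hj k hk]
  have hnorm : ∀ x : Fin N → ℂ, ‖Bl x‖ = ‖Cl x‖ := by
    intro x
    rw [@norm_eq_sqrt_re_inner ℂ, @norm_eq_sqrt_re_inner ℂ, hIn x]
  obtain ⟨U, hU⟩ := exists_isometry_comp Bl Cl hnorm
  have hstep : ∀ n : ℕ, n < N - 1 → U (f n) = f (n + 1) := by
    intro n hn
    have hnN : n < N := by omega
    have hmem : (⟨n, hnN⟩ : Fin N) ∈ J := by simp [J, hn]
    have hBx : Bl (fun i => if (i : ℕ) = n then 1 else 0) = f n := by
      rw [hBl, Finset.sum_eq_single (⟨n, hnN⟩ : Fin N)]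
      · simp
      · intro b _ hb
        have : (b : ℕ) ≠ n := fun h => hb (Fin.ext h)
        simp [this]
      · intro h; exact absurd hmem h
    have hCx : Cl (fun i => if (i : ℕ) = n then 1 else 0) = f (n + 1) := by
      rw [hCl, Finset.sum_eq_single (⟨n, hnN⟩ : Fin N)]
      · simp
      · intro b _ hb
        have : (b : ℕ) ≠ n := fun h => hb (Fin.ext h)
        simp [this]
      · intro h; exact absurd hmem h
    rw [← hBx, ← hCx]
    exact hU _
  have hpow : ∀ m : ℕ, m < N → (U.toLinearMap ^ m) (f 0) = f m := by
    intro m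
    induction m with
    | zero => intro _; simp
    | succ m ih =>
      intro hm
      rw [pow_succ', Module.End.mul_apply, ih (by omega)]
      exact hstep m (by omega)
  obtain ⟨s, w, habs, hwpos, hmom⟩ := exists_atoms U (f 0)
  have hgnat : ∀ n : ℕ, n < N → g (n : ℤ) = ∑ z ∈ s, (w z : ℂ) * z ^ n := by
    intro n hn
    have h1 : g (n : ℤ) = γ ⟨0, hN⟩ ⟨n, hn⟩ := by
      rw [hg 0 n hN hn]; norm_num
    rw [h1, ← hinner 0 n hN hn, ← hpow n hn, hmom n]
  -- the measure
  let μ : Measure ℂ := ∑ z ∈ s, (ENNReal.ofReal (w z)) • Measure.dirac z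
  have hmeas : ∀ m : ℤ, Measurable fun z : ℂ => z ^ m := by
    intro m
    cases m with
    | ofNat n => simpa using measurable_id.pow_const n
    | negSucc n =>
      have h : Measurable fun z : ℂ => z ^ (n + 1) := measurable_id.pow_const (n + 1)
      simpa [zpow_negSucc] using h
  have hint : ∀ m : ℤ, ∫ z, z ^ m ∂μ = ∑ z ∈ s, (w z : ℂ) * z ^ m := by
    intro m
    have hinteg : ∀ z ∈ s, Integrable (fun z : ℂ => z ^ m)
        ((ENNReal.ofReal (w z)) • Measure.dirac z) := by
      intro z _
      refine Integrable.smul_measure ?_ ENNReal.ofReal_ne_top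
      refine ⟨(hmeas m).aestronglyMeasurable, ?_⟩
      rw [HasFiniteIntegral, lintegral_dirac]
      exact ENNReal.coe_lt_top
    rw [integral_finset_sum_measure hinteg]
    refine Finset.sum_congr rfl fun z hz => ?_
    rw [integral_smul_measure, integral_dirac, ENNReal.toReal_ofReal (hwpos z hz)]
    rw [Complex.real_smul]
  refine ⟨μ, ?_, ?_, ?_⟩
  · refine ⟨?_⟩
    rw [Measure.finset_sum_apply]
    refine ENNReal.sum_lt_top.mpr fun z _ => ?_
    rw [Measure.smul_apply, smul_eq_mul]
    exact ENNReal.mul_lt_top ENNReal.ofReal_lt_top (by simp)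
  · rw [Measure.finset_sum_apply]
    refine Finset.sum_eq_zero fun z hz => ?_
    rw [Measure.smul_apply, Measure.dirac_apply]
    have : z ∉ {z : ℂ | ‖z‖ ≠ 1} := by simp [habs z hz]
    rw [Set.indicator_of_notMem this]
    simp
  · intro m hm
    rcases le_or_gt 0 m with hm0 | hm0
    · obtain ⟨n, rfl⟩ := Int.eq_ofNat_of_zero_le hm0
      have hn : n < N := by
        rw [abs_of_nonneg hm0] at hm
        omega
      rw [hint, hgnat n hn]
      refine Finset.sum_congr rfl fun z _ => ?_
      rw [zpow_natCast]
    · set n := m.natAbs with hn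
      have hmn : m = -(n : ℤ) := by omega
      have hnN : n < N := by
        rw [abs_of_neg hm0] at hm
        omega
      have hgm : g m = (starRingEnd ℂ) (g (n : ℤ)) := by
        have h1 : γ ⟨n, hnN⟩ ⟨0, hN⟩ = g m := by
          rw [hg n 0 hnN hN, hmn]; norm_num
        have h2 : γ ⟨n, hnN⟩ ⟨0, hN⟩ = star (γ ⟨0, hN⟩ ⟨n, hnN⟩) := (hγ.1.apply _ _).symm
        rw [← h1, h2, hg 0 n hN hnN]
        norm_num
      rw [hint, hgm, hgnat n hnN, map_sum]
      refine Finset.sum_congr rfl fun z hz => ?_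
      rw [_root_.map_mul, Complex.conj_ofReal]
      congr 1
      have habsn : ‖z ^ n‖ = 1 := by
        rw [norm_pow, habs z hz, one_pow]
      rw [hmn, _root_.zpow_neg, zpow_natCast, Complex.inv_eq_conj habsn]

end AuxMomentProblem
end

section
/- Let h be a real trigonometric polynomial on the n-torus with zero constant term: h(z) = Σ_{j ∈ Z} (h_j z^j + conj(h_j) z^{−j}) where Z ⊂ ℤⁿ \ {0} is finite and z^j = Π_l z_l^{j_l} for z in the torus 𝕋ⁿ = {z ∈ ℂⁿ : |z_l| = 1}. Then −min_{z ∈ 𝕋ⁿ} h(z) ≥ max_{j ∈ Z} |h_j|. -/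
open Complex Finset

-- geometric sum lemma
lemma aux_geom (N : ℕ) (hN : 0 < N) (k : ℤ) (hk0 : k ≠ 0) (hkN : k.natAbs < N) :
    ∑ a : Fin N, Complex.exp (2 * Real.pi * Complex.I / N) ^ (k * ((a : ℕ) : ℤ)) = 0 := by
  set ω := Complex.exp (2 * Real.pi * Complex.I / N) with hωdef
  have hprim : IsPrimitiveRoot ω N := Complex.isPrimitiveRoot_exp N hN.ne'
  set x : ℂ := ω ^ k with hx
  have hx1 : x ≠ 1 := by
    intro hx1
    have : (N : ℤ) ∣ k := (hprim.zpow_eq_one_iff_dvd k).mp hx1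
    have h2 : (N : ℤ) ≤ |k| := Int.le_of_dvd (abs_pos.mpr hk0) ((dvd_abs _ _).mpr this)
    rw [Int.abs_eq_natAbs] at h2
    omega
  have hxN : x ^ N = 1 := by
    rw [hx, ← zpow_natCast (ω ^ k) N, ← zpow_mul, mul_comm, zpow_mul, zpow_natCast,
      hprim.pow_eq_one, one_zpow]
  have : ∀ a : Fin N, ω ^ (k * ((a : ℕ) : ℤ)) = x ^ (a : ℕ) := by
    intro a
    rw [hx, zpow_mul, zpow_natCast]
  rw [Finset.sum_congr rfl (fun a _ => this a), Fin.sum_univ_eq_sum_range (fun i => x ^ i)]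
  rw [geom_sum_eq hx1, hxN]
  simp

noncomputable def PP (N : ℕ) {n : ℕ} (v : Fin n → ℤ) (t : Fin n → Fin N) : ℂ :=
  ∏ l, Complex.exp (2 * Real.pi * Complex.I / N) ^ (v l * ((t l : ℕ) : ℤ))

lemma PP_add (N : ℕ) {n : ℕ} (v w : Fin n → ℤ) (t : Fin n → Fin N) :
    PP N (v + w) t = PP N v t * PP N w t := by
  rw [PP, PP, PP, ← Finset.prod_mul_distrib]
  refine Finset.prod_congr rfl fun l _ => ?_
  rw [← zpow_add₀ (Complex.exp_ne_zero _)]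
  congr 1
  simp [add_mul]

lemma PP_zero (N : ℕ) {n : ℕ} (t : Fin n → Fin N) : PP N (0 : Fin n → ℤ) t = 1 := by
  simp [PP]

lemma PP_conj (N : ℕ) {n : ℕ} (v : Fin n → ℤ) (t : Fin n → Fin N) :
    starRingEnd ℂ (PP N v t) = PP N (-v) t := by
  rw [PP, PP, map_prod]
  refine Finset.prod_congr rfl fun l _ => ?_
  rw [map_zpow₀]
  have habs : ‖Complex.exp (2 * Real.pi * Complex.I / N)‖ = 1 := by
    rw [Complex.norm_exp]
    norm_num [Complex.div_re]
  have hconj : starRingEnd ℂ (Complex.exp (2 * Real.pi * Complex.I / N))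
      = (Complex.exp (2 * Real.pi * Complex.I / N))⁻¹ := by
    rw [← Complex.norm_mul_exp_arg_mul_I (Complex.exp (2 * Real.pi * Complex.I / N)), habs]
    simp [← Complex.exp_conj, ← Complex.exp_neg]
  rw [hconj, inv_zpow, ← zpow_neg]
  congr 1
  simp

lemma PP_abs (N : ℕ) {n : ℕ} (hN : 0 < N) (v : Fin n → ℤ) (t : Fin n → Fin N) :
    ‖PP N v t‖ = 1 := by
  rw [PP, norm_prod]
  refine Finset.prod_eq_one fun l _ => ?_
  rw [norm_zpow, Complex.norm_exp]
  norm_num [Complex.div_re]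

lemma sum_PP_eq_zero {N : ℕ} {n : ℕ} (hN : 0 < N) {v : Fin n → ℤ} (l₀ : Fin n)
    (h1 : v l₀ ≠ 0) (h2 : (v l₀).natAbs < N) :
    ∑ t : Fin n → Fin N, PP N v t = 0 := by
  rw [show (∑ t : Fin n → Fin N, PP N v t) = ∑ t : Fin n → Fin N, ∏ l,
      Complex.exp (2 * Real.pi * Complex.I / N) ^ (v l * ((t l : ℕ) : ℤ)) from rfl,
    ← Fintype.prod_sum (fun l (a : Fin N) => Complex.exp (2 * Real.pi * Complex.I / N) ^ (v l * ((a : ℕ) : ℤ)))]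
  exact Finset.prod_eq_zero (Finset.mem_univ l₀) (aux_geom N hN (v l₀) h1 h2)

lemma sum_PP_zero (N : ℕ) {n : ℕ} :
    ∑ t : Fin n → Fin N, PP N (0 : Fin n → ℤ) t = ((N : ℂ) ^ n) := by
  simp only [PP_zero]
  rw [Finset.sum_const, Finset.card_univ]
  simp [Fintype.card_fun]

/-- For a real trigonometric polynomial on the `n`-torus with no constant term,
`h(z) = Σ_{j ∈ Z} (h_j z^j + conj(h_j) z^{−j})`, the minimum over the torus satisfies
`−min h ≥ max_{j ∈ Z} |h_j|`; equivalently, for every `j ∈ Z` there is a point `z` on the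
torus where `h(z) ≤ −|h_j|`. -/
theorem stmt_13 (n : ℕ) (Z : Finset (Fin n → ℤ)) (h0 : (0 : Fin n → ℤ) ∉ Z)
    (hZ : ∀ j ∈ Z, -j ∉ Z) (h : (Fin n → ℤ) → ℂ) :
    ∀ j ∈ Z, ∃ z : Fin n → ℂ, (∀ l, ‖z l‖ = 1) ∧
      (∑ j' ∈ Z, (h j' * ∏ l, (z l) ^ (j' l) +
        starRingEnd ℂ (h j') * ∏ l, (z l) ^ (-(j' l)))).re ≤ -‖h j‖ := by
  intro s hs
  classical
  obtain ⟨B, hB_def⟩ : ∃ B : ℕ, B = (∑ j' ∈ Z, ∑ l, (j' l).natAbs) + ∑ l, (s l).natAbs :=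
    ⟨_, rfl⟩
  obtain ⟨N, hN_def⟩ : ∃ N : ℕ, N = 2 * B + 1 := ⟨_, rfl⟩
  have hN : 0 < N := by clear hB_def; omega
  -- bounds
  have hbZ : ∀ j' ∈ Z, ∀ l, (j' l).natAbs ≤ B := by
    intro j' hj' l
    have h1 : (j' l).natAbs ≤ ∑ l, (j' l).natAbs :=
      Finset.single_le_sum (f := fun l => (j' l).natAbs) (fun _ _ => Nat.zero_le _)
        (Finset.mem_univ l)
    have h2 : (∑ l, (j' l).natAbs) ≤ ∑ j'' ∈ Z, ∑ l, (j'' l).natAbs :=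
      Finset.single_le_sum (f := fun j'' => ∑ l, (j'' l).natAbs) (fun _ _ => Nat.zero_le _) hj'
    rw [hB_def]
    exact le_trans h1 (le_trans h2 (Nat.le_add_right _ _))
  have hs0 : s ≠ 0 := by
    intro hh
    rw [hh] at hs
    exact h0 hs
  -- vanishing sums
  have hSv : ∀ v : Fin n → ℤ, v ≠ 0 → (∀ l, (v l).natAbs ≤ 2 * B) →
      ∑ t : Fin n → Fin N, PP N v t = 0 := by
    intro v hv hb
    obtain ⟨l₀, hl₀⟩ := Function.ne_iff.mp hv
    exact sum_PP_eq_zero hN l₀ hl₀ (by clear hB_def; have := hb l₀; omega)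
  obtain ⟨e, he_def⟩ : ∃ e : ℂ, e = if h s = 0 then 1
      else (starRingEnd ℂ) (h s) / (‖h s‖ : ℂ) := ⟨_, rfl⟩
  have he1 : ‖e‖ = 1 := by
    rw [he_def]
    split_ifs with hhs
    · simp
    · rw [norm_div, Complex.norm_conj, Complex.norm_real, norm_norm, div_self]
      simpa using hhs
  have hehs : e * h s = (‖h s‖ : ℂ) := by
    rw [he_def]
    split_ifs with hhs
    · simp [hhs]
    · rw [div_mul_eq_mul_div, mul_comm, Complex.mul_conj', sq,
        mul_div_assoc, div_self (Complex.ofReal_ne_zero.mpr (norm_ne_zero_iff.mpr hhs)), mul_one]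
  have hehs' : (starRingEnd ℂ) e * (starRingEnd ℂ) (h s) = (‖h s‖ : ℂ) := by
    rw [← map_mul, hehs]
    simp [Complex.conj_ofReal]
  -- definitions of weight and polynomial
  obtain ⟨W, hW_def⟩ : ∃ W : (Fin n → Fin N) → ℂ, W = fun t =>
      2 - (starRingEnd ℂ) e * PP N s t - e * PP N (-s) t := ⟨_, rfl⟩
  obtain ⟨F, hF_def⟩ : ∃ F : (Fin n → Fin N) → ℂ, F = fun t =>
      ∑ j' ∈ Z, (h j' * PP N j' t + (starRingEnd ℂ) (h j') * PP N (-j') t) := ⟨_, rfl⟩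
  have hBB : B ≤ 2 * B := by clear hB_def; omega
  have hb1 : ∀ a : Fin n → ℤ, (a ∈ Z ∨ -a ∈ Z) → ∀ l, (a l).natAbs ≤ B := by
    rintro a (ha | ha) l
    · exact hbZ a ha l
    · have := hbZ (-a) ha l
      simpa using this
  have hvan1 : ∀ a : Fin n → ℤ, (a ∈ Z ∨ -a ∈ Z) → a ≠ 0 →
      ∑ t : Fin n → Fin N, PP N a t = 0 := fun a ha h' =>
    hSv a h' (fun l => le_trans (hb1 a ha l) hBB)
  have hvan2 : ∀ a b : Fin n → ℤ, (a ∈ Z ∨ -a ∈ Z) → (b ∈ Z ∨ -b ∈ Z) → a + b ≠ 0 →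
      ∑ t : Fin n → Fin N, PP N (a + b) t = 0 := by
    intro a b ha hb hab
    refine hSv _ hab (fun l => ?_)
    have h1 := hb1 a ha l
    have h2 := hb1 b hb l
    have h3 := Int.natAbs_add_le (a l) (b l)
    simp only [Pi.add_apply]
    clear hB_def
    omega
  -- sum of weights
  have hcard : (Finset.univ : Finset (Fin n → Fin N)).card = N ^ n := by
    rw [Finset.card_univ]
    simp [Fintype.card_fun]
  have hK1 : ∑ t : Fin n → Fin N, W t = 2 * (N : ℂ) ^ n := by
    rw [hW_def]
    rw [Finset.sum_sub_distrib, Finset.sum_sub_distrib, ← Finset.mul_sum, ← Finset.mul_sum,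
      hvan1 s (Or.inl hs) hs0, hvan1 (-s) (Or.inr (by simpa using hs)) (neg_ne_zero.mpr hs0),
      mul_zero, mul_zero, sub_zero, sub_zero, Finset.sum_const, hcard]
    simp [mul_comm]
  -- expansion of the weighted polynomial
  have hexp : ∀ (j' : Fin n → ℤ) (t : Fin n → Fin N),
      W t * (h j' * PP N j' t + (starRingEnd ℂ) (h j') * PP N (-j') t)
      = 2 * h j' * PP N j' t + 2 * (starRingEnd ℂ) (h j') * PP N (-j') t
        - ((starRingEnd ℂ) e * h j') * PP N (s + j') t
        - ((starRingEnd ℂ) e * (starRingEnd ℂ) (h j')) * PP N (s + -j') t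
        - (e * h j') * PP N (-s + j') t
        - (e * (starRingEnd ℂ) (h j')) * PP N (-s + -j') t := by
    intro j' t
    rw [hW_def]
    simp only [PP_add]
    ring
  have hterm : ∀ j' ∈ Z, ∑ t : Fin n → Fin N,
      W t * (h j' * PP N j' t + (starRingEnd ℂ) (h j') * PP N (-j') t)
      = if j' = s then -(2 * (N : ℂ) ^ n * (‖h s‖ : ℂ)) else 0 := by
    intro j' hj'
    have hj'0 : j' ≠ 0 := by
      intro hh
      rw [hh] at hj'
      exact h0 hj'
    simp only [hexp]
    rw [Finset.sum_sub_distrib, Finset.sum_sub_distrib, Finset.sum_sub_distrib,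
      Finset.sum_sub_distrib, Finset.sum_add_distrib, ← Finset.mul_sum, ← Finset.mul_sum,
      ← Finset.mul_sum, ← Finset.mul_sum, ← Finset.mul_sum, ← Finset.mul_sum]
    by_cases hjs : j' = s
    · subst hjs
      rw [if_pos rfl,
        hvan1 j' (Or.inl hj') hj'0,
        hvan1 (-j') (Or.inr (by simpa using hj')) (neg_ne_zero.mpr hj'0),
        hvan2 j' j' (Or.inl hj') (Or.inl hj')
          (by intro hh; apply hj'0; funext l; have := congrFun hh l; simp at this ⊢; clear hB_def; omega),
        show j' + -j' = (0 : Fin n → ℤ) by ring,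
        show -j' + j' = (0 : Fin n → ℤ) by ring,
        hvan2 (-j') (-j') (Or.inr (by simpa using hj')) (Or.inr (by simpa using hj'))
          (by
            intro hh
            apply hj'0
            funext l
            have := congrFun hh l
            simp at this ⊢
            clear hB_def
            omega),
        sum_PP_zero]
      rw [hehs', hehs]
      ring
    · rw [if_neg hjs]
      have h1 : s + j' ≠ 0 := by
        intro hh
        have : -j' = s := by
          funext l
          have := congrFun hh l
          simp at this ⊢
          clear hB_def
          omega
        exact hZ j' hj' (this ▸ hs)
      have h2 : s + -j' ≠ 0 := by
        intro hh
        apply hjs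
        funext l
        have := congrFun hh l
        simp at this ⊢
        clear hB_def
        omega
      have h3 : -s + j' ≠ 0 := by
        intro hh
        apply hjs
        funext l
        have := congrFun hh l
        simp at this ⊢
        clear hB_def
        omega
      have h4 : -s + -j' ≠ 0 := by
        intro hh
        apply h1
        funext l
        have := congrFun hh l
        simp at this ⊢
        clear hB_def
        omega
      rw [hvan1 j' (Or.inl hj') hj'0,
        hvan1 (-j') (Or.inr (by simpa using hj')) (neg_ne_zero.mpr hj'0),
        hvan2 s j' (Or.inl hs) (Or.inl hj') h1,
        hvan2 s (-j') (Or.inl hs) (Or.inr (by simpa using hj')) h2,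
        hvan2 (-s) j' (Or.inr (by simpa using hs)) (Or.inl hj') h3,
        hvan2 (-s) (-j') (Or.inr (by simpa using hs)) (Or.inr (by simpa using hj')) h4]
      ring
  have hK2 : ∑ t : Fin n → Fin N, W t * F t = -(2 * (N : ℂ) ^ n * (‖h s‖ : ℂ)) := by
    rw [hF_def]
    simp only [Finset.mul_sum]
    rw [Finset.sum_comm, Finset.sum_congr rfl hterm, Finset.sum_ite_eq' Z s, if_pos hs]
  -- weights are real and nonnegative
  have hWconj : ∀ t, W t = 2 - ((starRingEnd ℂ) e * PP N s t)
      - (starRingEnd ℂ) ((starRingEnd ℂ) e * PP N s t) := by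
    intro t
    rw [hW_def]
    simp only [map_mul, Complex.conj_conj, PP_conj]
  have hWim : ∀ t, (W t).im = 0 := by
    intro t
    rw [hWconj t]
    simp only [Complex.sub_im, Complex.conj_im]
    have h2 : ((2 : ℂ)).im = 0 := rfl
    rw [h2]
    ring
  have hWre : ∀ t, 0 ≤ (W t).re := by
    intro t
    rw [hWconj t]
    have hle : ((starRingEnd ℂ) e * PP N s t).re ≤ 1 := by
      refine le_trans (Complex.re_le_norm _) ?_
      rw [norm_mul, Complex.norm_conj, he1, PP_abs N hN, one_mul]
    simp only [Complex.sub_re, Complex.conj_re]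
    have h2 : ((2 : ℂ)).re = 2 := by norm_num
    rw [h2]
    linarith
  -- real versions
  have hR1 : ∑ t : Fin n → Fin N, (W t).re = 2 * (N : ℝ) ^ n := by
    have := congrArg Complex.re hK1
    rw [Complex.re_sum] at this
    rw [this]
    rw [show (2 * (N : ℂ) ^ n) = (((2 * (N : ℝ) ^ n : ℝ)) : ℂ) by push_cast; ring]
    exact Complex.ofReal_re _
  have hR2 : ∑ t : Fin n → Fin N, (W t).re * (F t).re
      = -(2 * (N : ℝ) ^ n * ‖h s‖) := by
    have := congrArg Complex.re hK2
    rw [Complex.re_sum] at this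
    have heq : ∀ t, (W t * F t).re = (W t).re * (F t).re := by
      intro t
      rw [Complex.mul_re, hWim t]
      ring
    rw [Finset.sum_congr rfl (fun t _ => heq t)] at this
    rw [this]
    rw [show -(2 * (N : ℂ) ^ n * (‖h s‖ : ℂ))
        = (((-(2 * (N : ℝ) ^ n * ‖h s‖) : ℝ)) : ℂ) by push_cast; ring]
    exact Complex.ofReal_re _
  -- conclude by contradiction
  by_contra hcon
  push_neg at hcon
  have hprod : ∀ (v : Fin n → ℤ) (t : Fin n → Fin N),
      ∏ l, (Complex.exp (2 * Real.pi * Complex.I / N) ^ ((t l : ℕ))) ^ (v l) = PP N v t := by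
    intro v t
    refine Finset.prod_congr rfl fun l _ => ?_
    rw [← zpow_natCast (Complex.exp (2 * Real.pi * Complex.I / N)) (t l), ← zpow_mul]
    congr 1
    ring
  have key : ∀ t : Fin n → Fin N, -‖h s‖ < (F t).re := by
    intro t
    have hz1 : ∀ l, ‖
        ((fun l => Complex.exp (2 * Real.pi * Complex.I / N) ^ ((t l : ℕ))) l)‖ = 1 := by
      intro l
      simp only [norm_pow, Complex.norm_exp]
      norm_num [Complex.div_re]
    have hceq : (∑ j' ∈ Z, (h j' *
          ∏ l, ((fun l => Complex.exp (2 * Real.pi * Complex.I / N) ^ ((t l : ℕ))) l) ^ (j' l) +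
        starRingEnd ℂ (h j') *
          ∏ l, ((fun l => Complex.exp (2 * Real.pi * Complex.I / N) ^ ((t l : ℕ))) l)
            ^ (-(j' l)))) = F t := by
      rw [hF_def]
      refine Finset.sum_congr rfl fun j' _ => ?_
      congr 1
      · rw [← hprod j' t]
      · rw [← hprod (-j') t]
        simp only [Pi.neg_apply]
    have := hcon _ hz1
    rw [hceq] at this
    exact this
  have hterm0 : ∀ t, 0 ≤ (W t).re * ((F t).re + ‖h s‖) := fun t =>
    mul_nonneg (hWre t) (by linarith [key t])
  have hex : ∃ t : Fin n → Fin N, 0 < (W t).re := by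
    by_contra hex
    push_neg at hex
    have h1 : ∑ t : Fin n → Fin N, (W t).re ≤ 0 :=
      Finset.sum_nonpos (fun t _ => hex t)
    rw [hR1] at h1
    have h2 : (0 : ℝ) < 2 * (N : ℝ) ^ n := by positivity
    linarith
  obtain ⟨t₀, ht₀⟩ := hex
  have hpos : 0 < ∑ t : Fin n → Fin N, (W t).re * ((F t).re + ‖h s‖) :=
    Finset.sum_pos' (fun t _ => hterm0 t)
      ⟨t₀, Finset.mem_univ _, mul_pos ht₀ (by linarith [key t₀])⟩
  have hzero : ∑ t : Fin n → Fin N, (W t).re * ((F t).re + ‖h s‖) = 0 := by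
    simp only [mul_add]
    rw [Finset.sum_add_distrib, hR2, ← Finset.sum_mul, hR1]
    ring
  linarith
end

section
/- Let μ be a probability measure on ℝ supported in [0, E⁺] such that ∫ e^{2πi(N−1)kE/(N E⁺)} dμ(E) = 0 for k = 1, …, N−1. Then the support of μ is contained in the finite set {k E⁺/(N−1) : k = 0, 1, …, N−1}. -/
open MeasureTheory
open Finset Polynomial Real Complex
open Finset Polynomial Real Complex

lemma prod_one_sub_root (n : ℕ) (hn : 0 < n) (ζ : ℂ) (hζ : IsPrimitiveRoot ζ n) (q : ℂ) :
    ∏ j ∈ Finset.range n, (1 - q * ζ ^ j) = 1 - q ^ n := by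
  rcases eq_or_ne q 0 with rfl | hq
  · simp [zero_pow hn.ne']
  · have h := X_pow_sub_C_eq_prod hζ hn (one_pow n)
    have h2 := congrArg (Polynomial.eval q⁻¹) h
    simp only [eval_sub, eval_pow, eval_X, eval_C, eval_prod, mul_one] at h2
    calc ∏ j ∈ Finset.range n, (1 - q * ζ ^ j)
        = ∏ j ∈ Finset.range n, (q * (q⁻¹ - ζ ^ j)) :=
          Finset.prod_congr rfl fun j _ => by field_simp
      _ = q ^ n * ∏ j ∈ Finset.range n, (q⁻¹ - ζ ^ j) := by
          rw [Finset.prod_mul_distrib, Finset.prod_const, Finset.card_range]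
      _ = q ^ n * (q⁻¹ ^ n - 1) := by rw [h2]
      _ = 1 - q ^ n := by rw [inv_pow, mul_sub, mul_inv_cancel₀ (pow_ne_zero _ hq)]; ring

lemma aux_exp_neg_pi_n (n : ℕ) : Complex.exp (-((π:ℂ)*n/2)*I) = (-I)^n := by
  induction n with
  | zero => simp
  | succ k ih =>
    have h : -((π:ℂ)*(k+1:ℕ)/2)*I = -((π:ℂ)*k/2)*I + (-((π:ℂ)/2))*I := by push_cast; ring
    rw [h, Complex.exp_add, ih, pow_succ, Complex.exp_mul_I]
    simp [Complex.cos_pi_div_two, Complex.sin_pi_div_two]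

lemma aux_prod_sin (n : ℕ) (x : ℂ) :
    ∏ j ∈ Finset.range (n+1), Complex.sin (x + j * (π:ℂ) / ((n:ℂ)+1)) =
      Complex.sin (((n:ℂ)+1) * x) / 2 ^ n := by
  have hM : ((n:ℂ)+1) ≠ 0 := by exact_mod_cast Nat.succ_ne_zero n
  have sin_eq : ∀ θ:ℂ, Complex.sin θ = (Complex.exp (-θ*I) - Complex.exp (θ*I)) * I / 2 :=
    fun θ => rfl
  have h1 : ∀ j ∈ Finset.range (n+1), Complex.sin (x + j * (π:ℂ) / ((n:ℂ)+1)) =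
      (Complex.exp (-(x + j*(π:ℂ)/((n:ℂ)+1))*I) *
        (1 - Complex.exp (2*x*I) * (Complex.exp (2*(π:ℂ)*I/((n:ℂ)+1)))^j)) * I / 2 := by
    intro j _
    rw [sin_eq]
    congr 2
    have e1 : Complex.exp (2*x*I) * (Complex.exp (2*(π:ℂ)*I/((n:ℂ)+1)))^j
        = Complex.exp (2*(x + j*(π:ℂ)/((n:ℂ)+1))*I) := by
      rw [← Complex.exp_nat_mul, ← Complex.exp_add]
      congr 1
      field_simp
    rw [e1, mul_sub, mul_one, ← Complex.exp_add]
    congr 2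
    ring
  rw [Finset.prod_congr rfl h1]
  have h2 : ∏ j ∈ Finset.range (n+1),
      ((Complex.exp (-(x + j*(π:ℂ)/((n:ℂ)+1))*I) *
        (1 - Complex.exp (2*x*I) * (Complex.exp (2*(π:ℂ)*I/((n:ℂ)+1)))^j)) * I / 2)
      = (∏ j ∈ Finset.range (n+1), Complex.exp (-(x + j*(π:ℂ)/((n:ℂ)+1))*I)) *
        (∏ j ∈ Finset.range (n+1), (1 - Complex.exp (2*x*I) * (Complex.exp (2*(π:ℂ)*I/((n:ℂ)+1)))^j))
        * I^(n+1) / 2^(n+1) := by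
    rw [Finset.prod_div_distrib, Finset.prod_mul_distrib, Finset.prod_mul_distrib,
      Finset.prod_const, Finset.prod_const, Finset.card_range]
  rw [h2]
  have hprim : IsPrimitiveRoot (Complex.exp (2*(π:ℂ)*I/((n:ℂ)+1))) (n+1) := by
    have := Complex.isPrimitiveRoot_exp (n+1) (Nat.succ_ne_zero n)
    convert this using 2
    push_cast
    ring
  have h3 := prod_one_sub_root (n+1) (Nat.succ_pos n) _ hprim (Complex.exp (2*x*I))
  rw [h3]
  have hgauss : (∑ j ∈ Finset.range (n+1), (j:ℂ)) = ((n:ℂ)+1)*n/2 := by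
    have h5 : ((∑ i ∈ Finset.range (n+1), i : ℕ) : ℂ) * 2 = (((n+1) * n : ℕ) : ℂ) := by
      exact_mod_cast congrArg (Nat.cast : ℕ → ℂ) (by simpa using Finset.sum_range_id_mul_two (n+1))
    push_cast at h5
    field_simp
    linear_combination h5
  have h4 : ∏ j ∈ Finset.range (n+1), Complex.exp (-(x + j*(π:ℂ)/((n:ℂ)+1))*I)
      = Complex.exp (-(((n:ℂ)+1)*x)*I) * Complex.exp (-((π:ℂ)*n/2)*I) := by
    rw [← Complex.exp_sum, ← Complex.exp_add]
    congr 1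
    calc ∑ j ∈ Finset.range (n+1), -(x + j*(π:ℂ)/((n:ℂ)+1))*I
        = ∑ j ∈ Finset.range (n+1), (-x*I + (-((π:ℂ)/((n:ℂ)+1))*I) * (j:ℂ)) :=
          Finset.sum_congr rfl fun j _ => by ring
      _ = (n+1) • (-x*I) + (-((π:ℂ)/((n:ℂ)+1))*I) * ∑ j ∈ Finset.range (n+1), (j:ℂ) := by
          rw [Finset.sum_add_distrib, Finset.sum_const, Finset.card_range, ← Finset.mul_sum]
      _ = -(((n:ℂ)+1)*x)*I + -((π:ℂ)*n/2)*I := by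
          rw [hgauss]; push_cast; field_simp; ring
  rw [h4, aux_exp_neg_pi_n, sin_eq (((n:ℂ)+1) * x)]
  have hmm : Complex.exp (-(((n:ℂ)+1)*x)*I) * (1 - Complex.exp (2*x*I) ^ (n+1))
      = Complex.exp (-(((n:ℂ)+1)*x)*I) - Complex.exp ((((n:ℂ)+1)*x)*I) := by
    rw [← Complex.exp_nat_mul, mul_sub, mul_one, ← Complex.exp_add]
    congr 2
    push_cast
    ring
  have hI : (-I)^n * I^(n+1) = I := by
    rw [pow_succ, ← mul_assoc, ← mul_pow]
    simp
  calc Complex.exp (-(((n:ℂ)+1)*x)*I) * (-I)^n * (1 - Complex.exp (2*x*I) ^ (n+1)) * I^(n+1) / 2^(n+1)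
      = (Complex.exp (-(((n:ℂ)+1)*x)*I) * (1 - Complex.exp (2*x*I) ^ (n+1))) * ((-I)^n * I^(n+1)) / 2^(n+1) := by
        ring
    _ = (Complex.exp (-(((n:ℂ)+1)*x)*I) - Complex.exp ((((n:ℂ)+1)*x)*I)) * I / 2 / 2^n := by
        rw [hmm, hI]; ring


noncomputable def DD (N : ℕ) (y : ℂ) : ℂ :=
  ∑ m ∈ Finset.range N, Complex.exp (Complex.I * ((N:ℂ) - 1 - 2*m) * y)

noncomputable def gg (N : ℕ) (y : ℂ) : ℂ := Complex.sin ((N:ℂ)*y) * Complex.cos y * DD N y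

lemma aux_sinD (N : ℕ) (y : ℂ) : Complex.sin ((N:ℂ) * y) = Complex.sin y * DD N y := by
  have sin_eq : ∀ θ:ℂ, Complex.sin θ = (Complex.exp (-θ*I) - Complex.exp (θ*I)) * I / 2 :=
    fun θ => rfl
  have expand : ∀ a : ℂ, Complex.sin y * Complex.exp (I*a*y)
      = Complex.exp (I*(a-1)*y)*I/2 - Complex.exp (I*(a+1)*y)*I/2 := by
    intro a
    rw [sin_eq]
    have e1 : Complex.exp (I*(a-1)*y) = Complex.exp (-y*I) * Complex.exp (I*a*y) := by
      rw [← Complex.exp_add]; congr 1; ring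
    have e2 : Complex.exp (I*(a+1)*y) = Complex.exp (y*I) * Complex.exp (I*a*y) := by
      rw [← Complex.exp_add]; congr 1; ring
    rw [e1, e2]; ring
  rw [DD, Finset.mul_sum]
  have h1 : ∀ m ∈ Finset.range N, Complex.sin y * Complex.exp (I * ((N:ℂ) - 1 - 2*m) * y)
      = (fun m : ℕ => Complex.exp (I*((N:ℂ)-2*m)*y)*I/2) (m+1)
        - (fun m : ℕ => Complex.exp (I*((N:ℂ)-2*m)*y)*I/2) m := by
    intro m _
    simp only
    rw [expand ((N:ℂ) - 1 - 2*m)]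
    congr 3 <;> push_cast <;> ring
  rw [Finset.sum_congr rfl h1, Finset.sum_range_sub (fun m : ℕ => Complex.exp (I*((N:ℂ)-2*m)*y)*I/2)]
  rw [sin_eq ((N:ℂ)*y)]
  rw [show I*((N:ℂ)-2*(N:ℕ))*y = -((N:ℂ)*y)*I by push_cast; ring,
      show I*((N:ℂ)-2*(0:ℕ))*y = ((N:ℂ)*y)*I by push_cast; ring]
  ring

lemma aux_split (n : ℕ) (X : ℂ) :
    Complex.sin X * Complex.sin (X + (π:ℂ)/((n:ℂ)+2)) *
      ∏ j ∈ Finset.Ico 2 (n+2), Complex.sin (X + j*(π:ℂ)/((n:ℂ)+2))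
    = Complex.sin (((n:ℂ)+2)*X) / 2^(n+1) := by
  have h := aux_prod_sin (n+1) X
  push_cast at h
  rw [show ((n:ℂ)+1+1) = ((n:ℂ)+2) by ring] at h
  rw [← h, Finset.range_eq_Ico, ← Finset.prod_Ico_consecutive _ (by omega : 0 ≤ 2) (by omega : 2 ≤ n+2)]
  congr 1
  rw [show Finset.Ico 0 2 = {0, 1} from rfl, Finset.prod_insert (by decide), Finset.prod_singleton]
  push_cast
  ring_nf

lemma aux_R1 (n : ℕ) (x : ℝ) :
    Real.sin (((n:ℝ)+2)*x) * (∏ j ∈ Finset.Ico 2 (n+2), Real.sin (x + j*π/((n:ℝ)+2))) *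
      (Real.sin x * Real.sin (x + π/((n:ℝ)+2))) * 2^(n+1) = Real.sin (((n:ℝ)+2)*x)^2 := by
  have h := aux_split n (x:ℂ)
  apply Complex.ofReal_injective
  push_cast
  rw [show ((x:ℂ) + π/((n:ℂ)+2)) = ((x + π/((n:ℝ)+2) : ℝ) : ℂ) by push_cast; ring] at h
  push_cast at h
  have h2 : ((2:ℂ))^(n+1) ≠ 0 := pow_ne_zero _ two_ne_zero
  rw [eq_div_iff h2] at h
  linear_combination Complex.sin (((n:ℂ)+2)*x) * h

noncomputable def ee (k : ℤ) (y : ℂ) : ℂ := Complex.exp (2*I*(k:ℂ)*y)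

lemma aux_CP (n : ℕ) (X : ℂ) :
    (Complex.sin (((n:ℂ)+2)*X) * ∏ j ∈ Finset.Ico 2 (n+2), Complex.sin (X + j*(π:ℂ)/((n:ℂ)+2))) *
      (2^(n+1) * Complex.sin ((π:ℂ)/((n:ℂ)+2)))
    = gg (n+2) X - gg (n+2) (X + (π:ℂ)/((n:ℂ)+2)) := by
  set P : ℂ := (π:ℂ)/((n:ℂ)+2) with hP
  have hM0 : ((n:ℂ)+2) ≠ 0 := by
    intro h
    have : ((n:ℝ)+2) = 0 := by exact_mod_cast congrArg Complex.re h
    nlinarith [Nat.cast_nonneg (α := ℝ) n]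
  have hcast : (((n+2:ℕ)):ℂ) = (n:ℂ)+2 := by push_cast; ring
  have hs : Complex.sin (((n:ℂ)+2)*(X+P)) = -Complex.sin (((n:ℂ)+2)*X) := by
    rw [mul_add, hP, mul_div_cancel₀ _ hM0, Complex.sin_add_pi]
  have hD1 := aux_sinD (n+2) X
  have hD2 := aux_sinD (n+2) (X+P)
  rw [hcast] at hD1 hD2
  have hsplit' : Complex.sin X * Complex.sin (X+P) *
      (∏ j ∈ Finset.Ico 2 (n+2), Complex.sin (X + j*(π:ℂ)/((n:ℂ)+2))) * 2^(n+1)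
      = Complex.sin (((n:ℂ)+2)*X) := by
    rw [aux_split n X]
    field_simp
  have hsinsub : Complex.sin P = Complex.sin (X+P) * Complex.cos X - Complex.cos (X+P) * Complex.sin X := by
    rw [← Complex.sin_sub]
    congr 1
    ring
  by_cases hz : Complex.sin X * Complex.sin (X+P) = 0
  · have hsz : Complex.sin (((n:ℂ)+2)*X) = 0 := by
      rcases mul_eq_zero.mp hz with h | h
      · rw [hD1, h, zero_mul]
      · have := hs.symm
        rw [hD2, h, zero_mul] at this
        exact neg_eq_zero.mp this
    simp only [gg, hcast]
    rw [hsz, hs, hsz]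
    ring
  · apply mul_right_cancel₀ hz
    simp only [gg, hcast]
    rw []
    linear_combination (Complex.sin (((n:ℂ)+2)*X) * Complex.sin P) * hsplit'
      + (Complex.sin (((n:ℂ)+2)*X) * Complex.cos X * Complex.sin (X+P)) * hD1
      + (-(Complex.sin (((n:ℂ)+2)*(X+P)) * Complex.cos (X+P) * Complex.sin X)) * hD2
      + (Complex.cos (X+P) * Complex.sin X * (Complex.sin (((n:ℂ)+2)*(X+P)) - Complex.sin (((n:ℂ)+2)*X))) * hs
      + (Complex.sin (((n:ℂ)+2)*X))^2 * hsinsub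

lemma aux_gg_expand (N : ℕ) (y : ℂ) :
    gg N y = ∑ m ∈ Finset.range N,
      (I/4) * (ee (-(m:ℤ)) y + ee (-(m:ℤ)-1) y - ee ((N:ℤ)-m) y - ee ((N:ℤ)-1-m) y) := by
  simp only [gg, DD, Finset.mul_sum]
  refine Finset.sum_congr rfl fun m _ => ?_
  have e1 : (2:ℂ)*I*((-(m:ℤ) : ℤ):ℂ)*y = (-((N:ℂ)*y)*I) + (y*I) + (I*((N:ℂ)-1-2*m)*y) := by
    push_cast; ring
  have e2 : (2:ℂ)*I*((-(m:ℤ)-1 : ℤ):ℂ)*y = (-((N:ℂ)*y)*I) + (-y*I) + (I*((N:ℂ)-1-2*m)*y) := by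
    push_cast; ring
  have e3 : (2:ℂ)*I*(((N:ℤ)-m : ℤ):ℂ)*y = ((((N:ℂ)*y))*I) + (y*I) + (I*((N:ℂ)-1-2*m)*y) := by
    push_cast; ring
  have e4 : (2:ℂ)*I*(((N:ℤ)-1-m : ℤ):ℂ)*y = ((((N:ℂ)*y))*I) + (-y*I) + (I*((N:ℂ)-1-2*m)*y) := by
    push_cast; ring
  rw [show Complex.sin ((N:ℂ)*y) = (Complex.exp (-((N:ℂ)*y)*I) - Complex.exp (((N:ℂ)*y)*I))*I/2 from rfl,
      show Complex.cos y = (Complex.exp (y*I) + Complex.exp (-y*I))/2 from rfl]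
  simp only [ee]
  rw [e1, e2, e3, e4]
  simp only [Complex.exp_add]
  ring

set_option maxHeartbeats 1000000 in
/-- (Energy-density rigidity, exact version) If a probability measure `μ` supported in
`[0, E⁺]` satisfies `∫ e^{2πi(N−1)kE/(NE⁺)} dμ(E) = 0` for `k = 1, …, N−1`, then `μ` is
supported in the finite set `{kE⁺/(N−1) : k = 0, …, N−1}`. -/
theorem stmt_14 (N : ℕ) (hN : 2 ≤ N) (Eplus : ℝ) (hE : 0 < Eplus)
    (μ : Measure ℝ) [IsProbabilityMeasure μ]
    (hsupp : μ (Set.Icc 0 Eplus)ᶜ = 0)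
    (hmom : ∀ k ∈ Finset.Icc 1 (N - 1),
      (∫ E, Complex.exp (((2 * Real.pi : ℝ) : ℂ) * Complex.I * ((N : ℂ) - 1) * (k : ℂ) *
          (E : ℂ) / ((N : ℂ) * (Eplus : ℂ))) ∂μ) = 0) :
    μ ({E : ℝ | ∃ k : ℕ, k ≤ N - 1 ∧ E = (k : ℝ) * Eplus / ((N : ℝ) - 1)})ᶜ = 0 := by
  obtain ⟨n, rfl⟩ : ∃ n, N = n + 2 := ⟨N - 2, by omega⟩
  have hEp : (Eplus : ℝ) ≠ 0 := ne_of_gt hE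
  have hEpC : (Eplus : ℂ) ≠ 0 := by exact_mod_cast hEp
  have hn2 : ((n:ℝ)+2) ≠ 0 := by positivity
  have hn2C : ((n:ℂ)+2) ≠ 0 := by
    intro h
    have : ((n:ℝ)+2) = 0 := by exact_mod_cast congrArg Complex.re h
    exact hn2 this
  -- the phase function and the auxiliary trig polynomial V
  set xE : ℝ → ℝ := fun E => π*((n:ℝ)+1)*E/(((n:ℝ)+2)*Eplus) with hxE
  set V : ℝ → ℝ := fun E =>
    Real.sin (((n:ℝ)+2)*(xE E)) * ∏ j ∈ Finset.Ico 2 (n+2), Real.sin (xE E + j*π/((n:ℝ)+2))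
    with hVdef
  set ec : ℤ → ℝ → ℂ := fun k E =>
    Complex.exp (((2*π*((n:ℝ)+1)*(k:ℝ)*E/(((n:ℝ)+2)*Eplus) : ℝ) : ℂ)*Complex.I) with hecdef
  set ψ : ℤ → ℝ → ℂ := fun k E =>
    (1 - Complex.exp (2*(π:ℂ)*Complex.I*(k:ℂ)/((n:ℂ)+2))) * ec k E with hψdef
  -- continuity and integrability of the exponentials
  have hec_cont : ∀ k, Continuous (ec k) := by
    intro k
    apply Complex.continuous_exp.comp
    exact (Complex.continuous_ofReal.comp (by fun_prop)).mul continuous_const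
  have hec_int : ∀ k, Integrable (ec k) μ := by
    intro k
    refine (integrable_const (1:ℝ)).mono' (hec_cont k).aestronglyMeasurable
      (Filter.Eventually.of_forall fun E => ?_)
    simp only [hecdef, Complex.norm_exp_ofReal_mul_I]
    exact le_refl 1
  -- vanishing of positive moments
  have hM : ∀ k : ℤ, 1 ≤ k → k ≤ (n:ℤ)+1 → ∫ E, ec k E ∂μ = 0 := by
    intro k hk1 hk2
    have hmem : k.toNat ∈ Finset.Icc 1 (n+2-1) := by
      simp only [Finset.mem_Icc]
      omega
    have h := hmom k.toNat hmem
    rw [← h]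
    refine integral_congr_ae (Filter.Eventually.of_forall fun E => ?_)
    simp only [hecdef]
    congr 1
    have hk : ((k.toNat : ℕ) : ℂ) = (k : ℂ) := by
      have h2 : ((k.toNat : ℕ) : ℤ) = k := Int.toNat_of_nonneg (by omega)
      exact_mod_cast congrArg (Int.cast : ℤ → ℂ) h2
    rw [hk]
    push_cast
    ring
  -- vanishing of negative moments via conjugation
  have hMneg : ∀ k : ℤ, -((n:ℤ)+1) ≤ k → k ≤ -1 → ∫ E, ec k E ∂μ = 0 := by
    intro k h1 h2
    have hconj : ∀ E, ec k E = (starRingEnd ℂ) (ec (-k) E) := by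
      intro E
      simp only [hecdef]
      rw [← Complex.exp_conj, map_mul, Complex.conj_ofReal, Complex.conj_I]
      congr 1
      push_cast
      ring
    calc ∫ E, ec k E ∂μ = ∫ E, (starRingEnd ℂ) (ec (-k) E) ∂μ :=
          integral_congr_ae (Filter.Eventually.of_forall hconj)
      _ = (starRingEnd ℂ) (∫ E, ec (-k) E ∂μ) := integral_conj
      _ = 0 := by rw [hM (-k) (by omega) (by omega), map_zero]
  -- the key cancellation
  have hK : ∀ k : ℤ, -((n:ℤ)+2) ≤ k → k ≤ (n:ℤ)+2 → ∫ E, ψ k E ∂μ = 0 := by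
    intro k hk1 hk2
    have hint : ∫ E, ψ k E ∂μ
        = (1 - Complex.exp (2*(π:ℂ)*Complex.I*(k:ℂ)/((n:ℂ)+2))) * ∫ E, ec k E ∂μ := by
      simp only [hψdef]
      exact integral_const_mul _ _
    rw [hint]
    by_cases hk0 : k = 0 ∨ k = (n:ℤ)+2 ∨ k = -((n:ℤ)+2)
    · have hone : Complex.exp (2*(π:ℂ)*Complex.I*(k:ℂ)/((n:ℂ)+2)) = 1 := by
        have : (2*(π:ℂ)*Complex.I*(k:ℂ)/((n:ℂ)+2)) = (k:ℂ)/((n:ℂ)+2) * (2*(π:ℂ)*Complex.I) := by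
          ring
        rw [this]
        rcases hk0 with rfl | rfl | rfl
        · simp
        · rw [show ((((n:ℤ)+2 : ℤ)):ℂ)/((n:ℂ)+2) = 1 by push_cast; field_simp]
          simp [Complex.exp_two_pi_mul_I]
        · rw [show (((-((n:ℤ)+2) : ℤ)):ℂ)/((n:ℂ)+2) = -1 by push_cast; field_simp]
          rw [show (-1 : ℂ) * (2*(π:ℂ)*Complex.I) = -(2*(π:ℂ)*Complex.I) by ring,
            Complex.exp_neg, Complex.exp_two_pi_mul_I]
          norm_num
      rw [hone, sub_self, zero_mul]
    · push_neg at hk0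
      obtain ⟨h0, hp, hm⟩ := hk0
      rcases lt_or_gt_of_ne h0 with hneg | hpos
      · rw [hMneg k (by omega) (by omega), mul_zero]
      · rw [hM k (by omega) (by omega), mul_zero]
  -- pointwise Fourier identity for V
  have hee1 : ∀ (k : ℤ) (E : ℝ), ee k ((xE E : ℝ) : ℂ) = ec k E := by
    intro k E
    simp only [ee, hecdef, hxE]
    congr 1
    push_cast
    field_simp
  have hee2 : ∀ (k : ℤ) (E : ℝ), ee k (((xE E : ℝ) : ℂ) + (π:ℂ)/((n:ℂ)+2))
      = Complex.exp (2*(π:ℂ)*Complex.I*(k:ℂ)/((n:ℂ)+2)) * ec k E := by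
    intro k E
    simp only [ee, hecdef, hxE]
    rw [← Complex.exp_add]
    congr 1
    push_cast
    field_simp
    ring
  have hVkey : ∀ E : ℝ, ((V E : ℝ) : ℂ) * (2^(n+1) * Complex.sin ((π:ℂ)/((n:ℂ)+2)))
      = ∑ m ∈ Finset.range (n+2), (Complex.I/4) *
          (ψ (-(m:ℤ)) E + ψ (-(m:ℤ)-1) E - ψ (((n+2:ℕ):ℤ)-m) E - ψ (((n+2:ℕ):ℤ)-1-m) E) := by
    intro E
    have h0 : ((V E : ℝ) : ℂ) = Complex.sin (((n:ℂ)+2)*((xE E : ℝ):ℂ)) *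
        ∏ j ∈ Finset.Ico 2 (n+2), Complex.sin (((xE E:ℝ):ℂ) + (j:ℂ)*(π:ℂ)/((n:ℂ)+2)) := by
      simp only [hVdef]
      push_cast
      ring_nf
      congr 1
      refine Finset.prod_congr rfl fun j _ => ?_
      push_cast
      ring
    rw [h0, aux_CP n _, aux_gg_expand (n+2) _, aux_gg_expand (n+2) _, ← Finset.sum_sub_distrib]
    refine Finset.sum_congr rfl fun m hm => ?_
    simp only [hee1, hee2, hψdef]
    ring
  -- integrability facts
  have hψ_int : ∀ k, Integrable (ψ k) μ := by
    intro k
    simp only [hψdef]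
    exact (hec_int k).const_mul _
  have hterm_int : ∀ m ∈ Finset.range (n+2), Integrable (fun E =>
      (Complex.I/4) * (ψ (-(m:ℤ)) E + ψ (-(m:ℤ)-1) E - ψ (((n+2:ℕ):ℤ)-m) E
        - ψ (((n+2:ℕ):ℤ)-1-m) E)) μ :=
    fun m _ => ((((hψ_int _).add (hψ_int _)).sub (hψ_int _)).sub (hψ_int _)).const_mul _
  have hVcont : Continuous V := by
    simp only [hVdef]
    apply Continuous.mul
    · fun_prop
    · exact continuous_finset_prod _ (fun j _ => by fun_prop)
  have hVint : Integrable V μ := by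
    refine (integrable_const (1:ℝ)).mono' hVcont.aestronglyMeasurable
      (Filter.Eventually.of_forall fun E => ?_)
    simp only [hVdef, Real.norm_eq_abs, abs_mul]
    have h2 : |∏ j ∈ Finset.Ico 2 (n+2), Real.sin (xE E + j*π/((n:ℝ)+2))| ≤ 1 := by
      rw [Finset.abs_prod]
      exact Finset.prod_le_one (fun j _ => abs_nonneg _) (fun j _ => Real.abs_sin_le_one _)
    have h1 : |Real.sin (((n:ℝ)+2)*(xE E))| ≤ 1 := Real.abs_sin_le_one _
    nlinarith [abs_nonneg (Real.sin (((n:ℝ)+2)*(xE E)))]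
  have hCne : (2^(n+1) * Complex.sin ((π:ℂ)/((n:ℂ)+2))) ≠ 0 := by
    apply mul_ne_zero (pow_ne_zero _ two_ne_zero)
    rw [show ((π:ℂ)/((n:ℂ)+2)) = ((π/((n:ℝ)+2) : ℝ) : ℂ) by push_cast; ring, ← Complex.ofReal_sin,
      Complex.ofReal_ne_zero]
    have hpos : 0 < Real.sin (π/((n:ℝ)+2)) := by
      apply Real.sin_pos_of_pos_of_lt_pi (by positivity)
      rw [div_lt_iff₀ (by positivity)]
      nlinarith [Real.pi_pos]
    exact ne_of_gt hpos
  -- the integral of V vanishes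
  have hIV : ∫ E, V E ∂μ = 0 := by
    have h1 : (((∫ E, V E ∂μ : ℝ)) : ℂ) * (2^(n+1) * Complex.sin ((π:ℂ)/((n:ℂ)+2))) = 0 := by
      have hio : (∫ E, ((V E : ℝ) : ℂ) ∂μ) = (((∫ E, V E ∂μ : ℝ)) : ℂ) := integral_ofReal
      rw [← hio, ← integral_mul_const,
        integral_congr_ae (Filter.Eventually.of_forall hVkey),
        integral_finset_sum _ hterm_int]
      refine Finset.sum_eq_zero fun m hm => ?_
      have hm' : m < n+2 := Finset.mem_range.mp hm
      have i1 : Integrable (fun E => ψ (-(m:ℤ)) E) μ := hψ_int _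
      have i2 : Integrable (fun E => ψ (-(m:ℤ)-1) E) μ := hψ_int _
      have i3 : Integrable (fun E => ψ (((n+2:ℕ):ℤ)-m) E) μ := hψ_int _
      have i4 : Integrable (fun E => ψ (((n+2:ℕ):ℤ)-1-m) E) μ := hψ_int _
      have i12 : Integrable (fun E => ψ (-(m:ℤ)) E + ψ (-(m:ℤ)-1) E) μ := i1.add i2
      have i123 : Integrable (fun E => ψ (-(m:ℤ)) E + ψ (-(m:ℤ)-1) E - ψ (((n+2:ℕ):ℤ)-m) E) μ :=
        i12.sub i3
      rw [integral_const_mul,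
          integral_sub i123 i4,
          integral_sub i12 i3,
          integral_add i1 i2,
          hK (-(m:ℤ)) (by omega) (by omega),
          hK (-(m:ℤ)-1) (by omega) (by omega),
          hK (((n+2:ℕ):ℤ)-m) (by omega) (by omega),
          hK (((n+2:ℕ):ℤ)-1-m) (by omega) (by omega)]
      norm_num
    rcases mul_eq_zero.mp h1 with h2 | h2
    · exact_mod_cast h2
    · exact absurd h2 hCne
  -- real product identity
  have hR1' : ∀ x : ℝ, Real.sin (((n:ℝ)+2)*x) *
      (∏ j ∈ Finset.Ico 2 (n+2), Real.sin (x + j*π/((n:ℝ)+2))) *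
      ((Real.sin x * Real.sin (x + π/((n:ℝ)+2))) * 2^(n+1)) = Real.sin (((n:ℝ)+2)*x)^2 :=
    fun x => by linear_combination (aux_R1 n x)
  -- nonnegativity of V on the support
  have hVnonneg : ∀ E ∈ Set.Icc 0 Eplus, 0 ≤ V E := by
    intro E hEm
    obtain ⟨hE0, hE1⟩ := hEm
    have hx0 : 0 ≤ xE E := by simp only [hxE]; positivity
    have hVx : V E = Real.sin (((n:ℝ)+2)*(xE E)) *
        ∏ j ∈ Finset.Ico 2 (n+2), Real.sin (xE E + j*π/((n:ℝ)+2)) := rfl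
    have hxM : xE E ≤ π*((n:ℝ)+1)/((n:ℝ)+2) := by
      have h2 : π*((n:ℝ)+1)/((n:ℝ)+2) = π*((n:ℝ)+1)*Eplus/(((n:ℝ)+2)*Eplus) :=
        (mul_div_mul_right _ _ hEp).symm
      rw [h2]
      simp only [hxE]
      rw [div_le_div_iff_of_pos_right (by positivity : (0:ℝ) < ((n:ℝ)+2)*Eplus)]
      exact mul_le_mul_of_nonneg_left hE1 (by positivity)
    rcases eq_or_lt_of_le hx0 with h0 | h0
    · rw [hVx, ← h0]
      simp
    rcases eq_or_lt_of_le hxM with h1 | h1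
    · rw [hVx]
      have h2 : (((n:ℝ))+2)*(xE E) = ((n+1:ℕ):ℝ)*π := by
        rw [h1]
        field_simp
        push_cast
        ring
      rw [h2, Real.sin_nat_mul_pi, zero_mul]
    · have hπn : π*((n:ℝ)+1)/((n:ℝ)+2) < π := by
        rw [div_lt_iff₀ (by positivity)]
        nlinarith [Real.pi_pos]
      have hs1 : 0 < Real.sin (xE E) := Real.sin_pos_of_pos_of_lt_pi h0 (lt_trans h1 hπn)
      have hs2 : 0 < Real.sin (xE E + π/((n:ℝ)+2)) := by
        apply Real.sin_pos_of_pos_of_lt_pi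
        · positivity
        · calc xE E + π/((n:ℝ)+2) < π*((n:ℝ)+1)/((n:ℝ)+2) + π/((n:ℝ)+2) := by linarith
            _ = π := by field_simp; ring
      by_contra hneg
      push_neg at hneg
      have heq : V E * ((Real.sin (xE E) * Real.sin (xE E + π/((n:ℝ)+2))) * 2^(n+1))
          = Real.sin (((n:ℝ)+2)*(xE E))^2 := by
        rw [hVx]
        exact hR1' (xE E)
      have hprod : V E * ((Real.sin (xE E) * Real.sin (xE E + π/((n:ℝ)+2))) * 2^(n+1)) < 0 :=
        mul_neg_of_neg_of_pos hneg (by positivity)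
      nlinarith [sq_nonneg (Real.sin (((n:ℝ)+2)*(xE E)))]
  -- zeros of V in the support are the claimed points
  have hzero : ∀ E ∈ Set.Icc 0 Eplus, V E = 0 →
      ∃ k : ℕ, k ≤ n+2-1 ∧ E = (k:ℝ) * Eplus / (((n+2:ℕ):ℝ) - 1) := by
    intro E hEm hV0
    obtain ⟨hE0, hE1⟩ := hEm
    have hVx : V E = Real.sin (((n:ℝ)+2)*(xE E)) *
        ∏ j ∈ Finset.Ico 2 (n+2), Real.sin (xE E + j*π/((n:ℝ)+2)) := rfl
    have heq : V E * ((Real.sin (xE E) * Real.sin (xE E + π/((n:ℝ)+2))) * 2^(n+1))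
        = Real.sin (((n:ℝ)+2)*(xE E))^2 := by
      rw [hVx]
      exact hR1' (xE E)
    rw [hV0, zero_mul] at heq
    have hsin0 : Real.sin (((n:ℝ)+2)*(xE E)) = 0 := by
      have := heq.symm
      exact pow_eq_zero_iff (two_ne_zero) |>.mp this
    obtain ⟨m, hm⟩ := Real.sin_eq_zero_iff.mp hsin0
    have hxval : ((n:ℝ)+2)*(xE E) = π*((n:ℝ)+1)*E/Eplus := by
      simp only [hxE]
      field_simp
    rw [hxval] at hm
    have hn1R : ((n:ℝ)+1) ≠ 0 := by positivity
    have hEeq : E = (m:ℝ) * Eplus / ((n:ℝ)+1) := by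
      rw [eq_div_iff hn1R]
      apply mul_left_cancel₀ Real.pi_ne_zero
      field_simp at hm
      rw [hm]; ring
    rw [hEeq] at hE0 hE1
    have hm0R : 0 ≤ (m:ℝ) := by
      rw [le_div_iff₀ (by positivity : (0:ℝ) < (n:ℝ)+1)] at hE0
      nlinarith
    have hm1R : (m:ℝ) ≤ (n:ℝ)+1 := by
      rw [div_le_iff₀ (by positivity : (0:ℝ) < (n:ℝ)+1)] at hE1
      nlinarith
    have hm0 : 0 ≤ m := by exact_mod_cast hm0R
    have hmle : m ≤ (n:ℤ)+1 := by exact_mod_cast hm1R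
    refine ⟨m.toNat, by omega, ?_⟩
    rw [hEeq]
    have hmt : ((m.toNat:ℕ):ℝ) = (m:ℝ) := by exact_mod_cast Int.toNat_of_nonneg hm0
    rw [hmt]
    push_cast
    ring_nf
  -- V vanishes μ-a.e.
  have hae : μ {E | V E ≠ 0} = 0 := by
    have hae_supp : ∀ᵐ E ∂μ, E ∈ Set.Icc 0 Eplus := by
      apply ae_iff.mpr
      exact hsupp
    have hnn : 0 ≤ᵐ[μ] V := by
      filter_upwards [hae_supp] with E hEm
      exact hVnonneg E hEm
    have h0 : V =ᵐ[μ] 0 := (integral_eq_zero_iff_of_nonneg_ae hnn hVint).mp hIV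
    have h1 := ae_iff.mp h0
    simpa using h1
  -- conclusion
  refine measure_mono_null ?_ (measure_union_null hae hsupp)
  intro E hE
  simp only [Set.mem_compl_iff, Set.mem_setOf_eq] at hE
  by_cases hEm : E ∈ Set.Icc 0 Eplus
  · left
    intro hV0
    exact hE (hzero E hEm hV0)
  · right
    exact hEm
end

section
/- For N ≥ 2 and E ∈ [0, E⁺], the function V(E) := sin(π(N−1)E/E⁺) · Π_{j=1}^{N−2} sin(jπ/N − π(N−1)E/(N E⁺)) is nonnegative, and V(E) = 0 if and only if E = k E⁺/(N−1) for some integer k with 0 ≤ k ≤ N−1. -/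
/-- The auxiliary function
`V(E) = sin(π(N−1)E/E⁺) · Π_{j=1}^{N−2} sin(jπ/N − π(N−1)E/(NE⁺))`. -/
noncomputable def Vfun (N : ℕ) (Eplus E : ℝ) : ℝ :=
  Real.sin (Real.pi * ((N : ℝ) - 1) * E / Eplus) *
    ∏ j ∈ Finset.Icc 1 (N - 2),
      Real.sin ((j : ℝ) * Real.pi / N - Real.pi * ((N : ℝ) - 1) * E / (N * Eplus))

set_option maxHeartbeats 1000000 in
/-- On `[0, E⁺]`, `V` is nonnegative and vanishes exactly at the points `kE⁺/(N−1)`,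
`k = 0, …, N−1`. -/
theorem stmt_15 (N : ℕ) (hN : 2 ≤ N) (Eplus : ℝ) (hE : 0 < Eplus) :
    ∀ E ∈ Set.Icc (0 : ℝ) Eplus,
      0 ≤ Vfun N Eplus E ∧
      (Vfun N Eplus E = 0 ↔ ∃ k : ℕ, k ≤ N - 1 ∧ E = (k : ℝ) * Eplus / ((N : ℝ) - 1)) := by
  have hN2 : (2:ℝ) ≤ (N:ℝ) := by exact_mod_cast hN
  have hNpos : (0:ℝ) < N := by linarith
  have hNne : (N:ℝ) ≠ 0 := hNpos.ne'
  have hN1 : (0:ℝ) < (N:ℝ) - 1 := by linarith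
  have hEne : Eplus ≠ 0 := hE.ne'
  have hcast2 : ((N-2:ℕ):ℝ) = (N:ℝ) - 2 := by
    rw [Nat.cast_sub hN]; norm_num
  intro E hEm
  obtain ⟨hE0, hE1⟩ := hEm
  set t : ℝ := ((N:ℝ) - 1) * E / Eplus with htdef
  have ht0 : 0 ≤ t := by positivity
  have htN : t ≤ (N:ℝ) - 1 := by
    rw [htdef, div_le_iff₀ hE]; nlinarith
  have hEt : E = t * Eplus / ((N:ℝ) - 1) := by
    rw [htdef]; field_simp
  have hVeq : Vfun N Eplus E =
      Real.sin (Real.pi * t) *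
        ∏ j ∈ Finset.Icc 1 (N-2), Real.sin (Real.pi * ((j:ℝ) - t) / N) := by
    unfold Vfun
    congr 1
    · congr 1; rw [htdef]; ring
    · refine Finset.prod_congr rfl fun j hj => ?_
      congr 1; rw [htdef]; field_simp
  obtain ⟨k, hkN, hkt, htk⟩ : ∃ k : ℕ, k ≤ N - 2 ∧ (k:ℝ) ≤ t ∧ t ≤ (k:ℝ) + 1 := by
    have h0 : (0:ℤ) ≤ ⌊t⌋ := Int.floor_nonneg.mpr ht0
    by_cases hc : ⌊t⌋.toNat ≤ N - 2
    · refine ⟨⌊t⌋.toNat, hc, ?_, ?_⟩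
      · have := Int.floor_le t
        rw [show ((⌊t⌋.toNat : ℕ):ℝ) = ((⌊t⌋:ℤ):ℝ) from by exact_mod_cast Int.toNat_of_nonneg h0]
        linarith
      · have := Int.lt_floor_add_one t
        rw [show ((⌊t⌋.toNat : ℕ):ℝ) = ((⌊t⌋:ℤ):ℝ) from by exact_mod_cast Int.toNat_of_nonneg h0]
        linarith
    · refine ⟨N - 2, le_refl _, ?_, ?_⟩
      · have hge : ((N:ℤ)) - 1 ≤ ⌊t⌋ := by omega
        have : ((N:ℝ)) - 1 ≤ t := by
          have := Int.floor_le t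
          have h2 : (((N:ℤ) - 1 : ℤ):ℝ) ≤ ((⌊t⌋:ℤ):ℝ) := by exact_mod_cast hge
          push_cast at h2; linarith
        rw [hcast2]; linarith
      · rw [hcast2]; linarith
  have signA : 0 ≤ (-1:ℝ)^k * Real.sin (Real.pi * t) := by
    have key : Real.sin (Real.pi * (t - k)) = (-1:ℝ)^k * Real.sin (Real.pi * t) := by
      have h1 := Real.sin_nat_mul_pi_sub (Real.pi * t) k
      have h2 : Real.pi * (t - k) = -((k:ℝ) * Real.pi - Real.pi * t) := by ring
      rw [h2, Real.sin_neg, h1]; ring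
    rw [← key]
    apply Real.sin_nonneg_of_nonneg_of_le_pi
    · have : (0:ℝ) ≤ t - k := by linarith
      positivity
    · nlinarith [Real.pi_pos]
  have signB : 0 ≤ (-1:ℝ)^k *
      ∏ j ∈ Finset.Icc 1 (N-2), Real.sin (Real.pi * ((j:ℝ) - t) / N) := by
    rw [← Finset.prod_filter_mul_prod_filter_not (Finset.Icc 1 (N-2)) (fun j => j ≤ k)]
    have hfil : Finset.filter (fun j => j ≤ k) (Finset.Icc 1 (N-2)) = Finset.Icc 1 k := by
      ext j; simp only [Finset.mem_filter, Finset.mem_Icc]; omega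
    rw [hfil, ← mul_assoc]
    apply mul_nonneg
    · have hcard : (Finset.Icc 1 k).card = k := by simp
      have h1 : ∏ j ∈ Finset.Icc 1 k, ((-1:ℝ) * Real.sin (Real.pi * ((j:ℝ) - t) / N))
          = (-1:ℝ)^k * ∏ j ∈ Finset.Icc 1 k, Real.sin (Real.pi * ((j:ℝ) - t) / N) := by
        rw [Finset.prod_mul_distrib, Finset.prod_const, hcard]
      rw [← h1]
      apply Finset.prod_nonneg
      intro j hj
      rw [Finset.mem_Icc] at hj
      have hjk : (j:ℝ) ≤ k := by exact_mod_cast hj.2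
      have h2 : (-1:ℝ) * Real.sin (Real.pi * ((j:ℝ) - t) / N)
          = Real.sin (Real.pi * (t - (j:ℝ)) / N) := by
        rw [show Real.pi * (t - (j:ℝ)) / N = -(Real.pi * ((j:ℝ) - t) / N) from by ring,
          Real.sin_neg]; ring
      rw [h2]
      apply Real.sin_nonneg_of_nonneg_of_le_pi
      · have : (0:ℝ) ≤ t - j := by linarith
        positivity
      · rw [div_le_iff₀ hNpos]; nlinarith [Real.pi_pos]
    · apply Finset.prod_nonneg
      intro j hj
      simp only [Finset.mem_filter, Finset.mem_Icc, not_le] at hj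
      have hj1 : (k:ℝ) + 1 ≤ (j:ℝ) := by exact_mod_cast hj.2
      have hj2 : (j:ℝ) ≤ (N:ℝ) - 2 := by
        have : (j:ℝ) ≤ ((N-2:ℕ):ℝ) := by exact_mod_cast hj.1.2
        linarith [hcast2 ▸ this]
      apply Real.sin_nonneg_of_nonneg_of_le_pi
      · have : (0:ℝ) ≤ (j:ℝ) - t := by linarith
        positivity
      · rw [div_le_iff₀ hNpos]; nlinarith [Real.pi_pos]
  constructor
  · rw [hVeq]
    have hmm : Real.sin (Real.pi * t) *
        ∏ j ∈ Finset.Icc 1 (N-2), Real.sin (Real.pi * ((j:ℝ) - t) / N)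
        = ((-1:ℝ)^k * Real.sin (Real.pi * t)) *
          ((-1:ℝ)^k * ∏ j ∈ Finset.Icc 1 (N-2), Real.sin (Real.pi * ((j:ℝ) - t) / N)) := by
      rw [mul_mul_mul_comm, ← mul_pow]; norm_num
    rw [hmm]
    exact mul_nonneg signA signB
  constructor
  · intro hV
    rw [hVeq] at hV
    rcases mul_eq_zero.mp hV with h | h
    · rcases Real.sin_eq_zero_iff.mp h with ⟨n, hn⟩
      have hnt : (n:ℝ) = t := mul_right_cancel₀ Real.pi_ne_zero
        (by linear_combination hn : (n:ℝ) * Real.pi = t * Real.pi)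
      have hn0 : (0:ℤ) ≤ n := by exact_mod_cast hnt ▸ ht0
      have hnN : (n:ℤ) ≤ (N:ℤ) - 1 := by
        have : (n:ℝ) ≤ (N:ℝ) - 1 := by rw [hnt]; exact htN
        exact_mod_cast this
      refine ⟨n.toNat, by omega, ?_⟩
      rw [hEt]
      congr 1
      rw [show ((n.toNat : ℕ):ℝ) = ((n:ℤ):ℝ) from by exact_mod_cast Int.toNat_of_nonneg hn0]
      rw [hnt]
    · rcases Finset.prod_eq_zero_iff.mp h with ⟨j, hj, hsin⟩
      rw [Finset.mem_Icc] at hj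
      rcases Real.sin_eq_zero_iff.mp hsin with ⟨n, hn⟩
      have hjt : (j:ℝ) - t = (n:ℝ) * N := by
        have h3 : Real.pi * ((n:ℝ) * N) = Real.pi * ((j:ℝ) - t) := by
          field_simp at hn; linear_combination Real.pi * hn
        have := mul_left_cancel₀ Real.pi_ne_zero h3
        linarith
      have hj1 : (1:ℝ) ≤ (j:ℝ) := by exact_mod_cast hj.1
      have hj2 : (j:ℝ) ≤ (N:ℝ) - 2 := by
        have : (j:ℝ) ≤ ((N-2:ℕ):ℝ) := by exact_mod_cast hj.2
        linarith [hcast2 ▸ this]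
      have hn0 : n = 0 := by
        by_contra hne
        rcases lt_or_gt_of_ne hne with hlt | hgt
        · have h4 : (n:ℝ) ≤ -1 := by
            have : n ≤ -1 := by omega
            exact_mod_cast this
          have h5 := mul_le_mul_of_nonneg_right h4 hNpos.le
          linarith
        · have h4 : (1:ℝ) ≤ (n:ℝ) := by
            have : 1 ≤ n := by omega
            exact_mod_cast this
          have h5 := mul_le_mul_of_nonneg_right h4 hNpos.le
          linarith
      have htj : t = (j:ℝ) := by rw [hn0] at hjt; push_cast at hjt; linarith
      refine ⟨j, by omega, ?_⟩
      rw [hEt, htj]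
  · rintro ⟨k', hk', hEk⟩
    have htk' : t = (k':ℝ) := by
      rw [htdef, hEk]; field_simp
    rw [hVeq, htk', mul_comm Real.pi, Real.sin_nat_mul_pi, zero_mul]
end
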